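/- arXiv:1603.08298 — 8 statements merged into one kernel-verified Lean document; each statement's English description precedes it below -/
import Mathlib

section
/- For every k ≥ 1, the sweep-out sequence satisfies the recursive-sum identity s_A(k) = (1-μ(A))^k + μ(A)·∑_{j=0}^{k-1} (1-μ(A))^{k-1-j}·c_A(j). -/
open MeasureTheory Filter Topology

noncomputable def hitTime {X : Type*} (T : X → X) (A : Set X) (x : X) : ℕ∞ :=
  sInf ((↑) '' {k : ℕ | 1 ≤ k ∧ T^[k] x ∈ A})

noncomputable def sweep {X : Type*} [MeasurableSpace X] (μ : Measure X) (T : X → X)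
    (A : Set X) (k : ℕ) : ℝ :=
  (μ (⋂ i ∈ Finset.range k, T^[i] ⁻¹' Aᶜ)).toReal

lemma hitTime_shift {X : Type*} (T : X → X) (A : Set X) (k : ℕ) :
    {x | (k : ℕ∞) < hitTime T A x} =
      T ⁻¹' (⋂ i ∈ Finset.range k, T^[i] ⁻¹' Aᶜ) := by
  ext x
  simp only [Set.mem_setOf_eq, hitTime, Set.mem_preimage, Set.mem_iInter, Finset.mem_range,
    Set.mem_compl_iff]
  constructor
  · intro h i hi hmem
    have h1 : (↑(i+1) : ℕ∞) ∈ (↑) '' {m : ℕ | 1 ≤ m ∧ T^[m] x ∈ A} := by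
      refine Set.mem_image_of_mem _ ⟨Nat.succ_le_succ (Nat.zero_le _), ?_⟩
      rwa [Function.iterate_succ_apply]
    have h2 := sInf_le h1
    have : (k : ℕ∞) < (↑(i+1) : ℕ∞) := lt_of_lt_of_le h h2
    exact absurd (Nat.cast_lt.mp this) (by omega)
  · intro h
    refine lt_of_lt_of_le (show (k:ℕ∞) < ((k+1:ℕ):ℕ∞) from Nat.cast_lt.mpr (Nat.lt_succ_self k)) ?_
    refine le_sInf ?_
    rintro b ⟨m, ⟨hm1, hm2⟩, rfl⟩
    have : k < m := by
      by_contra hle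
      have hmk : m - 1 < k := by omega
      have hx : T^[m-1] (T x) ∈ A := by
        have hm : m - 1 + 1 = m := by omega
        rw [← Function.iterate_succ_apply]
        simpa [Nat.succ_eq_add_one, hm] using hm2
      exact h (m-1) hmk hx
    exact_mod_cast this

theorem sweep_recursive_sum {X : Type*} [MeasurableSpace X] (μ : Measure X)
    [IsProbabilityMeasure μ] (T : X → X) (hT : MeasurePreserving T μ μ)
    (hE : Ergodic T μ) (A : Set X) (hA : MeasurableSet A) (hpos : 0 < μ A)
    (c : ℕ → ℝ)
    (hc : ∀ j : ℕ, c j = (μ {x | (j : ℕ∞) < hitTime T A x}).toReal -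
      ((ProbabilityTheory.cond μ A) {x | (j : ℕ∞) < hitTime T A x}).toReal)
    (k : ℕ) (hk : 1 ≤ k) :
    sweep μ T A k = (1 - (μ A).toReal) ^ k +
      (μ A).toReal * ∑ j ∈ Finset.range k, (1 - (μ A).toReal) ^ (k - 1 - j) * c j := by
  set a : ℝ := (μ A).toReal with ha_def
  have ha : 0 < a := ENNReal.toReal_pos hpos.ne' (measure_ne_top μ A)
  set B : ℕ → Set X := fun k => ⋂ i ∈ Finset.range k, T^[i] ⁻¹' Aᶜ with hB_def
  have hB_meas : ∀ k, MeasurableSet (B k) := by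
    intro k
    exact MeasurableSet.biInter (Finset.range k).countable_toSet
      fun i _ => hA.compl.preimage (hT.measurable.iterate i)
  -- measure of hit-time set
  have hμS : ∀ j : ℕ, μ {x | (j : ℕ∞) < hitTime T A x} = μ (B j) := by
    intro j
    rw [hitTime_shift, hT.measure_preimage (hB_meas j).nullMeasurableSet]
  -- B (j+1) = Aᶜ ∩ shifted set
  have hsplit : ∀ j, μ (B j) = μ (A ∩ {x | (j : ℕ∞) < hitTime T A x}) + μ (B (j+1)) := by
    intro j
    have h1 : B (j+1) = {x | (j : ℕ∞) < hitTime T A x} ∩ Aᶜ := by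
      rw [hitTime_shift]
      ext x
      simp only [hB_def, Set.mem_iInter, Finset.mem_range, Set.mem_inter_iff, Set.mem_preimage,
        Set.mem_compl_iff]
      constructor
      · intro h
        refine ⟨fun i hi => ?_, ?_⟩
        · have := h (i+1) (by omega)
          rwa [Function.iterate_succ_apply] at this
        · simpa using h 0 (by omega)
      · rintro ⟨h1, h2⟩ i hi
        cases i with
        | zero => simpa using h2
        | succ n =>
          rw [Function.iterate_succ_apply]
          exact h1 n (by omega)
    have h2 : μ {x | (j : ℕ∞) < hitTime T A x} =
        μ ({x | (j : ℕ∞) < hitTime T A x} ∩ A) + μ ({x | (j : ℕ∞) < hitTime T A x} \ A) :=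
      (measure_inter_add_diff _ hA).symm
    rw [← hμS j, h2, h1, Set.diff_eq, Set.inter_comm A]
  -- key recurrence: sweep (j+1) = (1-a) * sweep j + a * c j
  have key : ∀ j, sweep μ T A (j+1) = (1 - a) * sweep μ T A j + a * c j := by
    intro j
    have hp_ne : μ (A ∩ {x | (j : ℕ∞) < hitTime T A x}) ≠ ⊤ := measure_ne_top _ _
    have hcond : ((ProbabilityTheory.cond μ A) {x | (j : ℕ∞) < hitTime T A x}).toReal =
        (μ (A ∩ {x | (j : ℕ∞) < hitTime T A x})).toReal / a := by
      rw [ProbabilityTheory.cond_apply hA, ENNReal.toReal_mul, ENNReal.toReal_inv, ha_def]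
      ring
    have hsw : sweep μ T A j = (μ (A ∩ {x | (j : ℕ∞) < hitTime T A x})).toReal
        + sweep μ T A (j+1) := by
      have h1 : sweep μ T A j = (μ (B j)).toReal := rfl
      have h2 : sweep μ T A (j+1) = (μ (B (j+1))).toReal := rfl
      rw [h1, h2, hsplit j, ENNReal.toReal_add hp_ne (measure_ne_top _ _)]
    have hcj : c j = sweep μ T A j -
        (μ (A ∩ {x | (j : ℕ∞) < hitTime T A x})).toReal / a := by
      rw [hc j, hcond, hμS j]
      rfl
    rw [hcj]
    field_simp
    linarith [hsw]
  -- main induction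
  have main : ∀ n, sweep μ T A n = (1 - a) ^ n +
      a * ∑ j ∈ Finset.range n, (1 - a) ^ (n - 1 - j) * c j := by
    intro n
    induction n with
    | zero =>
      simp only [Finset.range_zero, Finset.sum_empty, mul_zero, pow_zero, add_zero]
      unfold sweep
      simp
    | succ m ih =>
      rw [key m, ih, Finset.sum_range_succ]
      have hexp : ∀ j ∈ Finset.range m, (1 - a) * ((1 - a) ^ (m - 1 - j) * c j)
          = (1 - a) ^ (m + 1 - 1 - j) * c j := by
        intro j hj
        rw [Finset.mem_range] at hj
        have : m + 1 - 1 - j = (m - 1 - j) + 1 := by omega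
        rw [this, pow_succ]
        ring
      have hsum : ∑ j ∈ Finset.range m, (1 - a) ^ (m + 1 - 1 - j) * c j
          = ∑ j ∈ Finset.range m, (1 - a) * ((1 - a) ^ (m - 1 - j) * c j) :=
        Finset.sum_congr rfl fun j hj => (hexp j hj).symm
      have hm0 : m + 1 - 1 - m = 0 := by omega
      rw [hsum, ← Finset.mul_sum, hm0, pow_zero, one_mul]
      ring
  exact main k
end

section
/- For every t > 0, the Laplace transform of the normalized hitting time satisfies φ_{A,X}(t) := ∫_X e^{-μ(A)·τ_A·t} dμ = 1 - (1 - e^{-μ(A)t})·∑_{k=0}^∞ e^{-μ(A)kt}·s_A(k). -/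
open MeasureTheory Filter Topology
open scoped ENNReal NNReal

theorem laplace_hitting_time {X : Type*} [MeasurableSpace X] (μ : Measure X)
    [IsProbabilityMeasure μ] (T : X → X) (hE : Ergodic T μ)
    (A : Set X) (hA : MeasurableSet A) (hpos : 0 < μ A) (t : ℝ) (ht : 0 < t) :
    ∫ x, Real.exp (-((μ A).toReal * ((hitTime T A x).toNat : ℝ) * t)) ∂μ =
      1 - (1 - Real.exp (-((μ A).toReal * t))) *
        ∑' k : ℕ, Real.exp (-((μ A).toReal * k * t)) * sweep μ T A k := by
  have hT := hE.toMeasurePreserving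
  have hTm : Measurable T := hT.measurable
  set a : ℝ := (μ A).toReal with ha
  have ha0 : 0 < a := ENNReal.toReal_pos hpos.ne' (measure_ne_top μ A)
  set c : ℝ := Real.exp (-(a * t)) with hc
  have hc0 : 0 < c := Real.exp_pos _
  have hc1 : c < 1 := by
    rw [hc, Real.exp_lt_one_iff]
    nlinarith
  -- the sets {τ > k}
  set S : ℕ → Set X := fun k => ⋂ i ∈ Finset.range k, T^[i + 1] ⁻¹' Aᶜ with hS
  have hSm : ∀ k, MeasurableSet (S k) := fun k =>
    Finset.measurableSet_biInter _ fun i _ => hA.compl.preimage (hTm.iterate (i + 1))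
  have hSmem : ∀ k x, x ∈ S k ↔ ∀ i < k, T^[i + 1] x ∉ A := by
    intro k x
    simp [hS, Set.mem_iInter]
  have hμS : ∀ k, (μ (S k)).toReal = sweep μ T A k := by
    intro k
    have hpre : T ⁻¹' (⋂ i ∈ Finset.range k, T^[i] ⁻¹' Aᶜ) = S k := by
      ext x
      simp [hS, Set.mem_iInter, Function.iterate_succ_apply]
    have hCm : MeasurableSet (⋂ i ∈ Finset.range k, T^[i] ⁻¹' Aᶜ) :=
      Finset.measurableSet_biInter _ fun i _ => hA.compl.preimage (hTm.iterate i)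
    rw [sweep, ← hT.measure_preimage hCm.nullMeasurableSet, hpre]
  -- a.e. the hitting time is finite
  have hae : ∀ᵐ x ∂μ, {k : ℕ | 1 ≤ k ∧ T^[k] x ∈ A}.Nonempty := by
    set B : Set X := ⋃ n : ℕ, T^[n + 1] ⁻¹' A with hB
    have hBm : MeasurableSet B :=
      MeasurableSet.iUnion fun n => hA.preimage (hTm.iterate (n + 1))
    have hsub : T ⁻¹' B ⊆ B := by
      intro x hx
      simp only [hB, Set.mem_preimage, Set.mem_iUnion] at hx ⊢
      obtain ⟨n, hn⟩ := hx
      exact ⟨n + 1, by rwa [Function.iterate_succ_apply]⟩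
    rcases hE.ae_empty_or_univ_of_preimage_ae_le hBm.nullMeasurableSet
        hsub.eventuallyLE with h | h
    · exfalso
      have h1 : T^[0 + 1] ⁻¹' A ⊆ B := by
        rw [hB]; exact Set.subset_iUnion (fun n => T^[n + 1] ⁻¹' A) 0
      have h2 : μ (T^[0 + 1] ⁻¹' A) = μ A :=
        (hT.iterate 1).measure_preimage hA.nullMeasurableSet
      have : μ B = 0 := by
        simpa using measure_congr h
      exact absurd (le_trans (h2 ▸ measure_mono h1) this.le) hpos.not_ge
    · rw [MeasureTheory.ae_eq_univ] at h
      have : ∀ᵐ x ∂μ, x ∈ B := by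
        rw [MeasureTheory.ae_iff]
        exact h
      filter_upwards [this] with x hx
      simp only [hB, Set.mem_iUnion, Set.mem_preimage] at hx
      obtain ⟨n, hn⟩ := hx
      exact ⟨n + 1, Nat.succ_le_succ (Nat.zero_le n), hn⟩
  -- the summand functions
  set F : ℕ → X → ℝ := fun k => (S k).indicator fun _ => c ^ k with hF
  have hFm : ∀ k, Measurable (F k) := fun k => measurable_const.indicator (hSm k)
  have hF0 : ∀ k x, 0 ≤ F k x := fun k x =>
    Set.indicator_nonneg (fun _ _ => by positivity) x
  have hFle : ∀ k x, F k x ≤ c ^ k := fun k x =>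
    Set.indicator_le_self' (fun _ _ => by positivity) x
  have hgeom : Summable fun k : ℕ => c ^ k := summable_geometric_of_lt_one hc0.le hc1
  have hFsum : ∀ x, Summable fun k => F k x := fun x =>
    Summable.of_nonneg_of_le (fun k => hF0 k x) (fun k => hFle k x) hgeom
  set g : X → ℝ := fun x => ∑' k, F k x with hg
  -- measurability of g
  have hgm : Measurable g := by
    have h1 : Measurable fun x => ∑' k, (F k x).toNNReal :=
      Measurable.nnreal_tsum fun k => (hFm k).real_toNNReal
    have h2 : g = fun x => NNReal.toReal (∑' k, (F k x).toNNReal) := by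
      funext x
      rw [NNReal.coe_tsum]
      exact tsum_congr fun k => (Real.coe_toNNReal _ (hF0 k x)).symm
    rw [h2]
    exact h1.coe_nnreal_real
  have hgle : ∀ x, g x ≤ (1 - c)⁻¹ := by
    intro x
    calc g x ≤ ∑' k, c ^ k := Summable.tsum_le_tsum (fun k => hFle k x) (hFsum x) hgeom
    _ = (1 - c)⁻¹ := tsum_geometric_of_lt_one hc0.le hc1
  have hg0 : ∀ x, 0 ≤ g x := fun x => tsum_nonneg fun k => hF0 k x
  have hgint : Integrable g μ := by
    refine ⟨hgm.aestronglyMeasurable, HasFiniteIntegral.of_bounded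
      (C := (1 - c)⁻¹) (Eventually.of_forall fun x => ?_)⟩
    rw [Real.norm_eq_abs, abs_of_nonneg (hg0 x)]
    exact hgle x
  -- pointwise key identity
  have hkey : ∀ᵐ x ∂μ,
      Real.exp (-(a * ((hitTime T A x).toNat : ℝ) * t)) = 1 - (1 - c) * g x := by
    filter_upwards [hae] with x hne
    set s : Set ℕ := {k : ℕ | 1 ≤ k ∧ T^[k] x ∈ A} with hs
    set n : ℕ := sInf s with hn
    have hns : n ∈ s := Nat.sInf_mem hne
    have hhit : hitTime T A x = (n : ℕ∞) := by
      apply le_antisymm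
      · exact sInf_le ⟨n, hns, rfl⟩
      · apply le_sInf
        rintro b ⟨m, hm, rfl⟩
        exact_mod_cast Nat.sInf_le hm
    have hmemS : ∀ k, x ∈ S k ↔ k < n := by
      intro k
      rw [hSmem]
      constructor
      · intro h
        by_contra hlt
        push_neg at hlt
        have h1 : 1 ≤ n := hns.1
        refine h (n - 1) (by omega) ?_
        have : n - 1 + 1 = n := by omega
        rw [this]
        exact hns.2
      · intro hkn i hik hiA
        have : n ≤ i + 1 := Nat.sInf_le ⟨Nat.succ_le_succ (Nat.zero_le i), hiA⟩
        omega
    have hFx : ∀ k, F k x = if k < n then c ^ k else 0 := by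
      intro k
      by_cases h : k < n
      · rw [if_pos h, hF]
        exact Set.indicator_of_mem ((hmemS k).mpr h) _
      · rw [if_neg h, hF]
        exact Set.indicator_of_notMem (fun hx => h ((hmemS k).mp hx)) _
    have hgx : g x = (c ^ n - 1) / (c - 1) := by
      rw [hg]
      simp only [hFx]
      rw [tsum_eq_sum (s := Finset.range n) (fun k hk => if_neg (by
        simp only [Finset.mem_range] at hk; omega)), ← geom_sum_eq hc1.ne n]
      exact Finset.sum_congr rfl fun k hk => if_pos (Finset.mem_range.mp hk)
    have htn : ((hitTime T A x).toNat : ℝ) = (n : ℝ) := by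
      rw [hhit, ENat.toNat_coe]
    rw [htn, hgx]
    have : Real.exp (-(a * (n : ℝ) * t)) = c ^ n := by
      rw [show -(a * (n : ℝ) * t) = (n : ℝ) * -(a * t) by ring, Real.exp_nat_mul, hc]
    rw [this]
    have hne1 : c - 1 ≠ 0 := sub_ne_zero.mpr hc1.ne
    field_simp
    ring
  -- put everything together
  rw [integral_congr_ae hkey]
  have hint : ∫ x, (1 - (1 - c) * g x) ∂μ = 1 - (1 - c) * ∫ x, g x ∂μ := by
    rw [integral_sub (integrable_const 1) (hgint.const_mul _), integral_const,
      probReal_univ, one_smul, integral_const_mul]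
  rw [hint]
  congr 1
  congr 1
  -- ∫ g = ∑' k, c^k * sweep k
  have hswap : ∫ x, g x ∂μ = ∑' k, ∫ x, F k x ∂μ := by
    apply integral_tsum (fun k => (hFm k).aestronglyMeasurable)
    have hbd : ∀ k : ℕ, ∫⁻ x, ‖F k x‖₊ ∂μ ≤ ENNReal.ofReal (c ^ k) := by
      intro k
      have : ∀ x, (‖F k x‖₊ : ℝ≥0∞) ≤ (S k).indicator (fun _ => ENNReal.ofReal (c ^ k)) x := by
        intro x
        by_cases hx : x ∈ S k
        · rw [Set.indicator_of_mem hx, hF]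
          simp only [Set.indicator_of_mem hx]
          rw [← enorm_eq_nnnorm, ← ofReal_norm, Real.norm_eq_abs,
            abs_of_nonneg (by positivity)]
        · rw [Set.indicator_of_notMem hx]
          simp [hF, Set.indicator_of_notMem hx]
      calc ∫⁻ x, ‖F k x‖₊ ∂μ ≤ ∫⁻ x, (S k).indicator (fun _ => ENNReal.ofReal (c ^ k)) x ∂μ :=
            lintegral_mono this
        _ = ENNReal.ofReal (c ^ k) * μ (S k) := lintegral_indicator_const (hSm k) _
        _ ≤ ENNReal.ofReal (c ^ k) * 1 := by
            exact mul_le_mul_right prob_le_one _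
        _ = ENNReal.ofReal (c ^ k) := mul_one _
    refine ne_top_of_le_ne_top ?_ (ENNReal.tsum_le_tsum hbd)
    have : ∑' k : ℕ, ENNReal.ofReal (c ^ k) = ∑' k : ℕ, (ENNReal.ofReal c) ^ k := by
      exact tsum_congr fun k => ENNReal.ofReal_pow hc0.le k
    rw [this, ENNReal.tsum_geometric]
    simp only [ne_eq, ENNReal.inv_eq_top, tsub_eq_zero_iff_le]
    exact fun h => absurd (ENNReal.one_le_ofReal.mp h) hc1.not_ge
  rw [hswap]
  apply tsum_congr
  intro k
  rw [hF, integral_indicator_const _ (hSm k), smul_eq_mul, measureReal_def, hμS k]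
  have : Real.exp (-(a * (k : ℝ) * t)) = c ^ k := by
    rw [show -(a * (k : ℝ) * t) = (k : ℝ) * -(a * t) by ring, Real.exp_nat_mul, hc]
  rw [this, mul_comm]
end

section
/- Let A_n be sets of positive measure with μ(A_n) → 0. Then the distributions of μ(A_n)·τ_{A_n} on (A_n, μ_{A_n}) converge weakly to the exponential distribution with parameter 1 if and only if the distributions of μ(A_n)·τ_{A_n} on (X, μ) converge weakly to the exponential distribution with parameter 1. -/
open MeasureTheory Filter Topology

lemma one_sub_exp_div :
    Tendsto (fun h : ℝ => (1 - Real.exp (-h)) / h) (𝓝[>] (0:ℝ)) (𝓝 1) := by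
  have hd : HasDerivAt (fun h : ℝ => 1 - Real.exp (-h)) 1 0 := by
    have h1 : HasDerivAt (fun h : ℝ => Real.exp (-h)) (-1) 0 := by
      simpa [Function.comp_def] using (Real.hasDerivAt_exp (-0)).comp 0 (hasDerivAt_neg 0)
    simpa using h1.const_sub 1
  have hs := hasDerivAt_iff_tendsto_slope.1 hd
  have := hs.mono_left (nhdsWithin_mono 0 (fun x hx => ne_of_gt hx))
  refine this.congr' ?_
  filter_upwards [self_mem_nhdsWithin] with h hh
  simp [slope, hh, div_eq_inv_mul]

lemma frac_lim : Tendsto (fun h : ℝ => h / (1 - Real.exp (-h))) (𝓝[>] (0:ℝ)) (𝓝 1) := by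
  simpa [inv_div] using one_sub_exp_div.inv₀ one_ne_zero

lemma geom_riemann (u : ℕ → ℝ) (N : ℕ → ℕ) (hu : ∀ K, 0 < u K)
    (hu0 : Tendsto u atTop (𝓝 0)) (c : ℝ)
    (hNc : Tendsto (fun K => Real.exp (-(N K * u K))) atTop (𝓝 c)) :
    Tendsto (fun K => ∑ i ∈ Finset.range (N K), u K * Real.exp (-((i+1) * u K)))
      atTop (𝓝 (1 - c)) := by
  have hq : ∀ K, Real.exp (-(u K)) ≠ 1 := fun K =>
    ne_of_lt (by rw [Real.exp_lt_one_iff]; linarith [hu K])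
  have key : ∀ K, ∑ i ∈ Finset.range (N K), u K * Real.exp (-((i+1) * u K))
      = (u K / (1 - Real.exp (-(u K)))) * Real.exp (-(u K)) * (1 - Real.exp (-(N K * u K))) := by
    intro K
    have h1 : ∀ i : ℕ, Real.exp (-(((i:ℝ)+1) * u K))
        = Real.exp (-(u K)) * Real.exp (-(u K)) ^ i := by
      intro i
      rw [show (-(((i:ℝ)+1) * u K)) = (-(u K)) + (i:ℝ) * (-(u K)) by ring,
        Real.exp_add, Real.exp_nat_mul]
    have h2 : Real.exp (-(u K)) ^ (N K) = Real.exp (-(N K * u K)) := by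
      rw [← Real.exp_nat_mul]; ring_nf
    simp only [h1, ← Finset.mul_sum, geom_sum_eq (hq K) (N K), h2]
    rw [show (Real.exp (-(N K * u K)) - 1) / (Real.exp (-(u K)) - 1)
        = (1 - Real.exp (-(N K * u K))) / (1 - Real.exp (-(u K))) by
      rw [← neg_sub (Real.exp (-(N K * u K))) 1, ← neg_sub (Real.exp (-(u K))) 1,
        neg_div_neg_eq]]
    ring
  simp only [key]
  have h1 : Tendsto (fun K => u K / (1 - Real.exp (-(u K)))) atTop (𝓝 1) :=
    frac_lim.comp (tendsto_nhdsWithin_of_tendsto_nhds_of_eventually_within _ hu0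
      (Eventually.of_forall fun K => hu K))
  have h2 : Tendsto (fun K => Real.exp (-(u K))) atTop (𝓝 1) := by
    have : Tendsto (fun K => -(u K)) atTop (𝓝 0) := by simpa using hu0.neg
    simpa [Function.comp_def] using (Real.continuous_exp.tendsto 0).comp this
  simpa using (h1.mul h2).mul (tendsto_const_nhds.sub hNc)

lemma abstract_main
    (a : ℕ → ℝ) (ha : ∀ n, 0 < a n) (ha0 : Tendsto a atTop (𝓝 0))
    (ψ φ : ℕ → ℕ → ℝ)
    (hψ0 : ∀ n k, 0 ≤ ψ n k)
    (hψanti : ∀ n, Antitone (ψ n))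
    (hφ0 : ∀ n, φ n 0 = 1)
    (hrec : ∀ n k, φ n (k+1) = φ n k - a n * ψ n k)
    (hφlim : ∀ n, Tendsto (φ n) atTop (𝓝 0)) :
    (∀ t : ℝ, 0 < t → Tendsto (fun n => ψ n ⌊t / a n⌋₊) atTop (𝓝 (Real.exp (-t)))) ↔
    (∀ t : ℝ, 0 < t → Tendsto (fun n => φ n ⌊t / a n⌋₊) atTop (𝓝 (Real.exp (-t)))) := by
  -- basic facts
  have hsum : ∀ n k l, k ≤ l → φ n k - φ n l = a n * ∑ j ∈ Finset.Ico k l, ψ n j := by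
    intro n k l hkl
    induction l, hkl using Nat.le_induction with
    | base => simp
    | succ l hkl ih =>
      rw [Finset.sum_Ico_succ_top hkl, mul_add, hrec n l]
      linarith
  have hineq_low : ∀ n k l, k ≤ l →
      a n * ((l - k : ℕ) : ℝ) * ψ n l ≤ φ n k - φ n l := by
    intro n k l hkl
    rw [hsum n k l hkl, mul_assoc]
    refine mul_le_mul_of_nonneg_left ?_ (ha n).le
    have := Finset.card_nsmul_le_sum (Finset.Ico k l) (fun j => ψ n j) (ψ n l)
      (fun j hj => hψanti n (le_of_lt (Finset.mem_Ico.1 hj).2))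
    simpa [Nat.card_Ico, nsmul_eq_mul] using this
  have hineq_high : ∀ n k l, k ≤ l →
      φ n k - φ n l ≤ a n * ((l - k : ℕ) : ℝ) * ψ n k := by
    intro n k l hkl
    rw [hsum n k l hkl, mul_assoc]
    refine mul_le_mul_of_nonneg_left ?_ (ha n).le
    have := Finset.sum_le_card_nsmul (Finset.Ico k l) (fun j => ψ n j) (ψ n k)
      (fun j hj => hψanti n (Finset.mem_Ico.1 hj).1)
    simpa [Nat.card_Ico, nsmul_eq_mul] using this
  have hφanti : ∀ n, Antitone (φ n) := by
    intro n
    refine antitone_nat_of_succ_le fun k => ?_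
    rw [hrec n k]
    nlinarith [hψ0 n k, (ha n).le]
  have hφnonneg : ∀ n k, 0 ≤ φ n k := fun n k =>
    le_of_tendsto (hφlim n) (eventually_atTop.2 ⟨k, fun l hl => hφanti n hl⟩)
  have hafloor : ∀ t : ℝ, 0 ≤ t →
      Tendsto (fun n => a n * (⌊t / a n⌋₊ : ℝ)) atTop (𝓝 t) := by
    intro t ht
    have hlim : Tendsto (fun n => t - a n) atTop (𝓝 t) := by
      simpa using tendsto_const_nhds.sub ha0
    refine tendsto_of_tendsto_of_tendsto_of_le_of_le' hlim tendsto_const_nhds ?_ ?_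
    · refine Eventually.of_forall fun n => ?_
      have h1 : t / a n < (⌊t / a n⌋₊ : ℝ) + 1 := Nat.lt_floor_add_one _
      have h2 : t < ((⌊t / a n⌋₊ : ℝ) + 1) * a n := by
        rw [← div_lt_iff₀ (ha n)] at *; exact h1
      nlinarith [ha n]
    · refine Eventually.of_forall fun n => ?_
      have h1 : (⌊t / a n⌋₊ : ℝ) ≤ t / a n := Nat.floor_le (div_nonneg ht (ha n).le)
      calc a n * (⌊t / a n⌋₊ : ℝ) ≤ a n * (t / a n) :=
            mul_le_mul_of_nonneg_left h1 (ha n).le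
        _ = t := by rw [mul_comm]; exact div_mul_cancel₀ t (ha n).ne'
  have hmono : ∀ n, ∀ s t : ℝ, s ≤ t → ⌊s / a n⌋₊ ≤ ⌊t / a n⌋₊ := fun n s t hst =>
    Nat.floor_le_floor (by gcongr; exact (ha n).le)
  have hdelta : ∀ s t : ℝ, 0 ≤ s → s ≤ t →
      Tendsto (fun n => a n * ((⌊t / a n⌋₊ - ⌊s / a n⌋₊ : ℕ) : ℝ)) atTop (𝓝 (t - s)) := by
    intro s t hs hst
    have he : ∀ n, a n * ((⌊t / a n⌋₊ - ⌊s / a n⌋₊ : ℕ) : ℝ)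
        = a n * (⌊t / a n⌋₊ : ℝ) - a n * (⌊s / a n⌋₊ : ℝ) := by
      intro n; rw [Nat.cast_sub (hmono n s t hst)]; ring
    simp only [he]
    exact (hafloor t (hs.trans hst)).sub (hafloor s hs)
  constructor
  · -- forward: ψ convergence → φ convergence
    intro hΨ t ht
    have chunkLB : ∀ s u : ℝ, 0 ≤ s → s ≤ u → 0 < u →
        Tendsto (fun n => a n * ((⌊u / a n⌋₊ - ⌊s / a n⌋₊ : ℕ) : ℝ) * ψ n ⌊u / a n⌋₊)
          atTop (𝓝 ((u - s) * Real.exp (-u))) :=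
      fun s u hs hsu hu => (hdelta s u hs hsu).mul (hΨ u hu)
    rw [tendsto_order]
    constructor
    · -- lower bound : c < e^{-t}
      intro c hc
      -- choose K with c < e^{-t} * Riemann sum with h = 1/(K+1), M = (K+1)^2
      have hR : Tendsto (fun K : ℕ => Real.exp (-t) *
          ∑ i ∈ Finset.range ((K+1)^2), (1/((K:ℝ)+1)) * Real.exp (-(((i:ℝ)+1) * (1/((K:ℝ)+1)))))
          atTop (𝓝 (Real.exp (-t))) := by
        have := geom_riemann (fun K => 1/((K:ℝ)+1)) (fun K => (K+1)^2)
          (fun K => by positivity)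
          (tendsto_one_div_add_atTop_nhds_zero_nat) 0 ?_
        · simpa using tendsto_const_nhds.mul this
        · have : ∀ K : ℕ, Real.exp (-((((K:ℕ)+1)^2 : ℕ) * (1/((K:ℝ)+1)))) = Real.exp (-((K:ℝ)+1)) := by
            intro K
            congr 1
            push_cast
            field_simp
          simp only [this]
          have h1 : Tendsto (fun K : ℕ => -((K:ℝ)+1)) atTop atBot := by
            apply tendsto_neg_atBot_iff.2
            exact tendsto_atTop_add_const_right _ 1 tendsto_natCast_atTop_atTop
          exact Real.tendsto_exp_atBot.comp h1
      obtain ⟨K, hK⟩ := (hR.eventually (eventually_gt_nhds hc)).exists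
      set h : ℝ := 1/((K:ℝ)+1) with hhdef
      have hh : 0 < h := by positivity
      set M : ℕ := (K+1)^2 with hMdef
      -- the chain of chunks
      have hchain_le : ∀ n,
          ∑ i ∈ Finset.range M, a n * ((⌊(t+((i:ℝ)+1)*h) / a n⌋₊ - ⌊(t+(i:ℝ)*h) / a n⌋₊ : ℕ) : ℝ)
            * ψ n ⌊(t+((i:ℝ)+1)*h) / a n⌋₊ ≤ φ n ⌊t / a n⌋₊ := by
        intro n
        have step : ∀ i ∈ Finset.range M,
            a n * ((⌊(t+((i:ℝ)+1)*h) / a n⌋₊ - ⌊(t+(i:ℝ)*h) / a n⌋₊ : ℕ) : ℝ)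
              * ψ n ⌊(t+((i:ℝ)+1)*h) / a n⌋₊
            ≤ φ n ⌊(t+(i:ℝ)*h) / a n⌋₊ - φ n ⌊(t+((i:ℝ)+1)*h) / a n⌋₊ := by
          intro i _
          exact hineq_low n _ _ (hmono n _ _ (by nlinarith))
        calc _ ≤ ∑ i ∈ Finset.range M,
              (φ n ⌊(t+(i:ℝ)*h) / a n⌋₊ - φ n ⌊(t+((i:ℝ)+1)*h) / a n⌋₊) :=
            Finset.sum_le_sum step
          _ = φ n ⌊t / a n⌋₊ - φ n ⌊(t+(M:ℝ)*h) / a n⌋₊ := by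
            have tel := Finset.sum_range_sub' (fun i : ℕ => φ n ⌊(t+(i:ℝ)*h) / a n⌋₊) M
            push_cast at tel
            simpa using tel
          _ ≤ φ n ⌊t / a n⌋₊ := by
            have := hφnonneg n ⌊(t+(M:ℝ)*h) / a n⌋₊
            linarith
      have hchain_lim : Tendsto (fun n =>
          ∑ i ∈ Finset.range M, a n * ((⌊(t+((i:ℝ)+1)*h) / a n⌋₊ - ⌊(t+(i:ℝ)*h) / a n⌋₊ : ℕ) : ℝ)
            * ψ n ⌊(t+((i:ℝ)+1)*h) / a n⌋₊) atTop
          (𝓝 (∑ i ∈ Finset.range M, ((t+((i:ℝ)+1)*h) - (t+(i:ℝ)*h)) * Real.exp (-(t+((i:ℝ)+1)*h)))) := by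
        apply tendsto_finset_sum
        intro i _
        exact chunkLB _ _ (by nlinarith) (by nlinarith) (by nlinarith)
      have hsum_eq : ∑ i ∈ Finset.range M, ((t+((i:ℝ)+1)*h) - (t+(i:ℝ)*h)) * Real.exp (-(t+((i:ℝ)+1)*h))
          = Real.exp (-t) * ∑ i ∈ Finset.range M, h * Real.exp (-(((i:ℝ)+1) * h)) := by
        rw [Finset.mul_sum]
        refine Finset.sum_congr rfl fun i _ => ?_
        rw [show (-(t+((i:ℝ)+1)*h)) = (-t) + (-(((i:ℝ)+1)*h)) by ring, Real.exp_add]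
        ring
      rw [hsum_eq] at hchain_lim
      have hev := hchain_lim.eventually (eventually_gt_nhds hK)
      filter_upwards [hev] with n hn
      exact lt_of_lt_of_le hn (hchain_le n)
    · -- upper bound : c > e^{-t}
      intro c hc
      have hR : Tendsto (fun K : ℕ => 1 -
          ∑ i ∈ Finset.range (K+1), (t/((K:ℝ)+1)) * Real.exp (-(((i:ℝ)+1) * (t/((K:ℝ)+1)))))
          atTop (𝓝 (Real.exp (-t))) := by
        have := geom_riemann (fun K => t/((K:ℝ)+1)) (fun K => K+1)
          (fun K => by positivity)
          (by
            have : Tendsto (fun K : ℕ => t * (1/((K:ℝ)+1))) atTop (𝓝 (t * 0)) :=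
              tendsto_const_nhds.mul tendsto_one_div_add_atTop_nhds_zero_nat
            simpa [div_eq_mul_inv, one_div] using this)
          (Real.exp (-t)) ?_
        · simpa using (tendsto_const_nhds :
            Tendsto (fun _ : ℕ => (1:ℝ)) atTop (𝓝 1)).sub this
        · have : ∀ K : ℕ, Real.exp (-((((K:ℕ)+1) : ℕ) * (t/((K:ℝ)+1)))) = Real.exp (-t) := by
            intro K
            congr 1
            push_cast
            field_simp
          simp only [this]
          exact tendsto_const_nhds
      obtain ⟨K, hK⟩ := (hR.eventually (eventually_lt_nhds hc)).exists
      set h : ℝ := t/((K:ℝ)+1) with hhdef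
      have hh : 0 < h := by positivity
      set M : ℕ := K+1 with hMdef
      have hMh : ((K:ℝ)+1) * h = t := by
        rw [hhdef]
        field_simp
      have hchain_le : ∀ n, φ n ⌊t / a n⌋₊ ≤ 1 -
          ∑ i ∈ Finset.range M, a n * ((⌊(((i:ℝ)+1)*h) / a n⌋₊ - ⌊((i:ℝ)*h) / a n⌋₊ : ℕ) : ℝ)
            * ψ n ⌊(((i:ℝ)+1)*h) / a n⌋₊ := by
        intro n
        have step : ∀ i ∈ Finset.range M,
            a n * ((⌊(((i:ℝ)+1)*h) / a n⌋₊ - ⌊((i:ℝ)*h) / a n⌋₊ : ℕ) : ℝ)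
              * ψ n ⌊(((i:ℝ)+1)*h) / a n⌋₊
            ≤ φ n ⌊((i:ℝ)*h) / a n⌋₊ - φ n ⌊(((i:ℝ)+1)*h) / a n⌋₊ := by
          intro i _
          exact hineq_low n _ _ (hmono n _ _ (by nlinarith))
        have htel : ∑ i ∈ Finset.range M,
            (φ n ⌊((i:ℝ)*h) / a n⌋₊ - φ n ⌊(((i:ℝ)+1)*h) / a n⌋₊)
            = 1 - φ n ⌊t / a n⌋₊ := by
          have tel := Finset.sum_range_sub' (fun i : ℕ => φ n ⌊((i:ℝ)*h) / a n⌋₊) M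
          push_cast at tel
          rw [show (M:ℝ) * h = t by rw [hMdef]; push_cast; exact hMh] at tel
          simpa [hφ0 n] using tel
        have := Finset.sum_le_sum step
        rw [htel] at this
        linarith
      have hchain_lim : Tendsto (fun n => 1 -
          ∑ i ∈ Finset.range M, a n * ((⌊(((i:ℝ)+1)*h) / a n⌋₊ - ⌊((i:ℝ)*h) / a n⌋₊ : ℕ) : ℝ)
            * ψ n ⌊(((i:ℝ)+1)*h) / a n⌋₊) atTop
          (𝓝 (1 - ∑ i ∈ Finset.range M, ((((i:ℝ)+1)*h) - ((i:ℝ)*h)) * Real.exp (-(((i:ℝ)+1)*h)))) := by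
        refine tendsto_const_nhds.sub (tendsto_finset_sum _ fun i _ => ?_)
        exact chunkLB _ _ (by positivity) (by nlinarith) (by positivity)
      have hsum_eq : ∑ i ∈ Finset.range M, ((((i:ℝ)+1)*h) - ((i:ℝ)*h)) * Real.exp (-(((i:ℝ)+1)*h))
          = ∑ i ∈ Finset.range M, h * Real.exp (-(((i:ℝ)+1) * h)) := by
        refine Finset.sum_congr rfl fun i _ => ?_
        ring_nf
      rw [hsum_eq] at hchain_lim
      have hev := hchain_lim.eventually (eventually_lt_nhds hK)
      filter_upwards [hev] with n hn
      exact lt_of_le_of_lt (hchain_le n) hn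
  · -- backward: φ convergence → ψ convergence
    intro hΦ t ht
    rw [tendsto_order]
    constructor
    · -- c < e^{-t}
      intro c hc
      -- pick h > 0 with c * h < e^{-t} - e^{-(t+h)}
      obtain ⟨h, hh, hch⟩ : ∃ h : ℝ, 0 < h ∧ c * h < Real.exp (-t) - Real.exp (-(t+h)) := by
        have hf : Tendsto (fun h : ℝ => Real.exp (-t) * ((1 - Real.exp (-h)) / h))
            (𝓝[>] (0:ℝ)) (𝓝 (Real.exp (-t))) := by
          simpa using tendsto_const_nhds.mul one_sub_exp_div
        have := (hf.eventually (eventually_gt_nhds hc)).and self_mem_nhdsWithin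
        obtain ⟨h, h1, h2⟩ := this.exists
        refine ⟨h, h2, ?_⟩
        have h3 : c * h < Real.exp (-t) * (1 - Real.exp (-h)) := by
          calc c * h < (Real.exp (-t) * ((1 - Real.exp (-h)) / h)) * h :=
                mul_lt_mul_of_pos_right h1 h2
            _ = Real.exp (-t) * (1 - Real.exp (-h)) := by
                field_simp
        have e1 : Real.exp (-(t+h)) = Real.exp (-t) * Real.exp (-h) := by
          rw [← Real.exp_add]; congr 1; ring
        rw [e1]
        nlinarith
      have hub := fun n => hineq_high n ⌊t / a n⌋₊ ⌊(t+h) / a n⌋₊ (hmono n _ _ (by linarith))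
      have hdiff : Tendsto (fun n => φ n ⌊t / a n⌋₊ - φ n ⌊(t+h) / a n⌋₊) atTop
          (𝓝 (Real.exp (-t) - Real.exp (-(t+h)))) := (hΦ t ht).sub (hΦ (t+h) (by linarith))
      have hda := hdelta t (t+h) ht.le (by linarith)
      have hev1 : ∀ᶠ n in atTop,
          c * (a n * ((⌊(t+h) / a n⌋₊ - ⌊t / a n⌋₊ : ℕ) : ℝ)) < φ n ⌊t / a n⌋₊ - φ n ⌊(t+h) / a n⌋₊ :=
        (tendsto_const_nhds.mul hda).eventually_lt hdiff (by simpa using hch)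
      have hev2 : ∀ᶠ n in atTop, 0 < a n * ((⌊(t+h) / a n⌋₊ - ⌊t / a n⌋₊ : ℕ) : ℝ) :=
        hda.eventually (eventually_gt_nhds (by linarith : (0:ℝ) < t + h - t))
      filter_upwards [hev1, hev2] with n h1 h2
      have h3 : c * (a n * ((⌊(t+h) / a n⌋₊ - ⌊t / a n⌋₊ : ℕ) : ℝ))
          < a n * ((⌊(t+h) / a n⌋₊ - ⌊t / a n⌋₊ : ℕ) : ℝ) * ψ n ⌊t / a n⌋₊ :=
        lt_of_lt_of_le h1 (hub n)
      nlinarith [h3, h2]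
    · -- c > e^{-t}
      intro c hc
      obtain ⟨h, hh, hht, hch⟩ : ∃ h : ℝ, 0 < h ∧ h < t ∧
          Real.exp (-(t-h)) - Real.exp (-t) < c * h := by
        have hf : Tendsto (fun h : ℝ => Real.exp (-t) * (Real.exp h * ((1 - Real.exp (-h)) / h)))
            (𝓝[>] (0:ℝ)) (𝓝 (Real.exp (-t))) := by
          have h2 : Tendsto (fun h : ℝ => Real.exp h) (𝓝[>] (0:ℝ)) (𝓝 1) := by
            have h3 : Tendsto Real.exp (𝓝[>] (0:ℝ)) (𝓝 (Real.exp 0)) :=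
              (Real.continuous_exp.tendsto 0).mono_left nhdsWithin_le_nhds
            simpa using h3
          simpa using tendsto_const_nhds.mul (h2.mul one_sub_exp_div)
        have hev3 : ∀ᶠ h in 𝓝[>] (0:ℝ), h < t :=
          eventually_nhdsWithin_of_eventually_nhds (eventually_lt_nhds ht)
        have := ((hf.eventually (eventually_lt_nhds hc)).and self_mem_nhdsWithin).and hev3
        obtain ⟨h, ⟨h1, h2⟩, h3⟩ := this.exists
        refine ⟨h, h2, h3, ?_⟩
        have key : Real.exp (-(t-h)) - Real.exp (-t)
            = Real.exp (-t) * (Real.exp h * (1 - Real.exp (-h))) := by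
          have e1 : Real.exp (-(t-h)) = Real.exp (-t) * Real.exp h := by
            rw [← Real.exp_add]; congr 1; ring
          have e2 : Real.exp (-t) * Real.exp h * Real.exp (-h) = Real.exp (-t) := by
            rw [mul_assoc, ← Real.exp_add]; simp
          rw [e1]; linear_combination e2
        rw [key]
        have h4 : Real.exp (-t) * (Real.exp h * ((1 - Real.exp (-h)) / h)) * h
            = Real.exp (-t) * (Real.exp h * (1 - Real.exp (-h))) := by
          field_simp
        nlinarith [h1, h2]
      have hlb := fun n => hineq_low n ⌊(t-h) / a n⌋₊ ⌊t / a n⌋₊ (hmono n _ _ (by linarith))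
      have hdiff : Tendsto (fun n => φ n ⌊(t-h) / a n⌋₊ - φ n ⌊t / a n⌋₊) atTop
          (𝓝 (Real.exp (-(t-h)) - Real.exp (-t))) := (hΦ (t-h) (by linarith)).sub (hΦ t ht)
      have hda := hdelta (t-h) t (by linarith) (by linarith)
      have hev1 : ∀ᶠ n in atTop,
          φ n ⌊(t-h) / a n⌋₊ - φ n ⌊t / a n⌋₊ <
            c * (a n * ((⌊t / a n⌋₊ - ⌊(t-h) / a n⌋₊ : ℕ) : ℝ)) := by
        refine hdiff.eventually_lt (tendsto_const_nhds.mul hda) ?_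
        simpa using hch
      have hev2 : ∀ᶠ n in atTop, 0 < a n * ((⌊t / a n⌋₊ - ⌊(t-h) / a n⌋₊ : ℕ) : ℝ) := by
        refine hda.eventually (eventually_gt_nhds ?_)
        linarith
      filter_upwards [hev1, hev2] with n h1 h2
      have h3 : a n * ((⌊t / a n⌋₊ - ⌊(t-h) / a n⌋₊ : ℕ) : ℝ) * ψ n ⌊t / a n⌋₊
          < c * (a n * ((⌊t / a n⌋₊ - ⌊(t-h) / a n⌋₊ : ℕ) : ℝ)) :=
        lt_of_le_of_lt (hlb n) h1
      nlinarith [h3, h2]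

def hitSet {X : Type*} (T : X → X) (A : Set X) (k : ℕ) : Set X :=
  {x | ∀ i : ℕ, 1 ≤ i → i ≤ k → T^[i] x ∉ A}

lemma hit_gt {X : Type*} (T : X → X) (A : Set X) (x : X) (k : ℕ) :
    ((k:ℕ∞) < hitTime T A x) ↔ x ∈ hitSet T A k := by
  constructor
  · intro h i h1 hik hmem
    have h2 : (i:ℕ∞) ∈ (↑) '' {j : ℕ | 1 ≤ j ∧ T^[j] x ∈ A} := ⟨i, ⟨h1, hmem⟩, rfl⟩
    have h3 := lt_of_lt_of_le h (sInf_le h2)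
    rw [Nat.cast_lt] at h3
    omega
  · intro h
    have hk : ((k+1:ℕ):ℕ∞) ≤ hitTime T A x := by
      apply le_sInf
      rintro b ⟨j, ⟨hj1, hjA⟩, rfl⟩
      rw [Nat.cast_le]
      by_contra hc
      push_neg at hc
      exact h j hj1 (by omega) hjA
    calc (k:ℕ∞) < ((k+1:ℕ):ℕ∞) := by rw [Nat.cast_lt]; omega
      _ ≤ _ := hk

lemma hit_top_iff {X : Type*} (T : X → X) (A : Set X) (x : X) :
    hitTime T A x = ⊤ ↔ ∀ i : ℕ, 1 ≤ i → T^[i] x ∉ A := by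
  rw [hitTime, sInf_eq_top]
  constructor
  · intro h i h1 hmem
    exact (ENat.coe_ne_top i) (h _ ⟨i, ⟨h1, hmem⟩, rfl⟩)
  · rintro h b ⟨j, ⟨hj1, hjA⟩, rfl⟩
    exact absurd hjA (h j hj1)

lemma hitSet_eq_iInter {X : Type*} (T : X → X) (A : Set X) (k : ℕ) :
    hitSet T A k = ⋂ i ∈ Finset.Icc 1 k, T^[i] ⁻¹' Aᶜ := by
  ext x
  simp [hitSet]

lemma measurable_hitSet {X : Type*} [MeasurableSpace X] {T : X → X} (hT : Measurable T)
    {A : Set X} (hA : MeasurableSet A) (k : ℕ) : MeasurableSet (hitSet T A k) := by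
  rw [hitSet_eq_iInter]
  exact MeasurableSet.biInter (Finset.Icc 1 k).countable_toSet
    (fun i _ => (hT.iterate i) hA.compl)

lemma hitSet_antitone {X : Type*} (T : X → X) (A : Set X) : Antitone (hitSet T A) := by
  intro k l hkl x hx i h1 hik
  exact hx i h1 (hik.trans hkl)

lemma hitSet_zero {X : Type*} (T : X → X) (A : Set X) : hitSet T A 0 = Set.univ := by
  ext x; simp [hitSet]; omega

lemma iInter_hitSet {X : Type*} (T : X → X) (A : Set X) :
    ⋂ k, hitSet T A k = {x | ∀ i : ℕ, 1 ≤ i → T^[i] x ∉ A} := by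
  ext x
  simp only [Set.mem_iInter, Set.mem_setOf_eq, hitSet]
  exact ⟨fun h i h1 => h i i h1 le_rfl, fun h k i h1 _ => h i h1⟩

lemma preimage_hitSet {X : Type*} (T : X → X) (A : Set X) (k : ℕ) :
    T ⁻¹' (hitSet T A k) = hitSet T A (k+1) ∪ T ⁻¹' (A ∩ hitSet T A k) := by
  ext x
  simp only [Set.mem_preimage, Set.mem_union, Set.mem_inter_iff, hitSet, Set.mem_setOf_eq]
  constructor
  · intro hP
    by_cases hTx : T x ∈ A
    · right; exact ⟨hTx, hP⟩
    · left
      intro i h1 hik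
      obtain ⟨j, rfl⟩ := Nat.exists_eq_succ_of_ne_zero (by omega : i ≠ 0)
      rcases Nat.eq_zero_or_pos j with rfl | hj
      · simpa using hTx
      · rw [Function.iterate_succ_apply]
        exact hP j hj (by omega)
  · rintro (hQ | ⟨hTx, hP⟩)
    · intro i h1 hik
      rw [← Function.iterate_succ_apply]
      exact hQ (i+1) (by omega) (by omega)
    · exact hP

lemma measure_hitSet_rec {X : Type*} [MeasurableSpace X] {μ : Measure X} {T : X → X}
    (hmp : MeasurePreserving T μ μ) {A : Set X} (hA : MeasurableSet A) (k : ℕ) :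
    μ (hitSet T A k) = μ (hitSet T A (k+1)) + μ (A ∩ hitSet T A k) := by
  have hS := measurable_hitSet hmp.measurable hA
  have hdisj : Disjoint (hitSet T A (k+1)) (T ⁻¹' (A ∩ hitSet T A k)) := by
    rw [Set.disjoint_left]
    intro x hx1 hx2
    have h1 : T^[1] x ∉ A := hx1 1 le_rfl (by omega)
    simp only [Function.iterate_one] at h1
    exact h1 hx2.1
  calc μ (hitSet T A k) = μ (T ⁻¹' (hitSet T A k)) := (hmp.measure_preimage (hS k).nullMeasurableSet).symm
    _ = μ (hitSet T A (k+1) ∪ T ⁻¹' (A ∩ hitSet T A k)) := by rw [preimage_hitSet]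
    _ = μ (hitSet T A (k+1)) + μ (T ⁻¹' (A ∩ hitSet T A k)) :=
        measure_union hdisj (hmp.measurable (hA.inter (hS k)))
    _ = μ (hitSet T A (k+1)) + μ (A ∩ hitSet T A k) := by
        rw [hmp.measure_preimage (hA.inter (hS k)).nullMeasurableSet]

lemma measure_never_hit {X : Type*} [MeasurableSpace X] {μ : Measure X}
    [IsProbabilityMeasure μ] {T : X → X} (hE : Ergodic T μ) {A : Set X}
    (hA : MeasurableSet A) (hpos : 0 < μ A) :
    μ {x | ∀ i : ℕ, 1 ≤ i → T^[i] x ∉ A} = 0 := by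
  set N := {x | ∀ i : ℕ, 1 ≤ i → T^[i] x ∉ A} with hN
  have hT : Measurable T := hE.toMeasurePreserving.measurable
  have hNmeas : MeasurableSet N := by
    have : N = ⋂ i : ℕ, T^[i+1] ⁻¹' Aᶜ := by
      ext x
      simp only [Set.mem_iInter, Set.mem_preimage, Set.mem_compl_iff, hN, Set.mem_setOf_eq]
      exact ⟨fun h i => h (i+1) (by omega), fun h i h1 => by
        obtain ⟨j, rfl⟩ := Nat.exists_eq_succ_of_ne_zero (by omega : i ≠ 0); exact h j⟩
    rw [this]
    exact MeasurableSet.iInter fun i => (hT.iterate (i+1)) hA.compl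
  have hsub : N ⊆ T ⁻¹' N := by
    intro x hx i h1
    rw [← Function.iterate_succ_apply]
    exact hx (i+1) (by omega)
  have haeeq : T ⁻¹' N =ᵐ[μ] N := by
    refine (ae_eq_of_subset_of_measure_ge hsub ?_ ?_ ?_).symm
    · exact (hE.toMeasurePreserving.measure_preimage hNmeas.nullMeasurableSet).le
    · exact hNmeas.nullMeasurableSet
    · exact measure_ne_top μ _
  rcases hE.quasiErgodic.ae_empty_or_univ₀ hNmeas.nullMeasurableSet haeeq with hempty | huniv
  · simpa using measure_congr hempty
  · exfalso
    have hcons : MeasureTheory.Conservative T μ := hE.toMeasurePreserving.conservative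
    have hPoin := hcons.measure_mem_forall_ge_image_notMem_eq_zero hA.nullMeasurableSet 1
    have hsub2 : A ∩ N ⊆ {x | x ∈ A ∧ ∀ m ≥ 1, T^[m] x ∉ A} := by
      rintro x ⟨hxA, hxN⟩
      exact ⟨hxA, fun m hm => hxN m hm⟩
    have h1 : μ (A ∩ N) = 0 := measure_mono_null hsub2 hPoin
    have h2 : μ (A ∩ N) = μ A := by
      have hNc : μ Nᶜ = 0 := by
        have := measure_congr huniv
        simp only [measure_univ] at this
        rw [measure_compl hNmeas (measure_ne_top μ _), this]
        simp
      have : μ (A \ N) = 0 := measure_mono_null (fun x hx => hx.2) hNc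
      have h3 := measure_inter_add_diff A hNmeas (μ := μ)
      rw [this] at h3
      simpa using h3
    rw [h1] at h2
    exact absurd h2.symm (ne_of_gt hpos)
lemma statement_set_eq {X : Type*} (T : X → X) (A : Set X) (a : ℝ) (ha : 0 < a)
    (t : ℝ) (ht : 0 < t) :
    {x | t < a * ((hitTime T A x).toNat : ℝ)}
      = hitSet T A ⌊t/a⌋₊ \ {x | hitTime T A x = ⊤} := by
  ext x
  simp only [Set.mem_setOf_eq, Set.mem_diff]
  by_cases h : hitTime T A x = ⊤
  · simp only [h, ENat.toNat_top, Nat.cast_zero, mul_zero]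
    constructor
    · intro hlt; linarith
    · rintro ⟨-, hne⟩; simp at hne
  · have hj : hitTime T A x = ((hitTime T A x).toNat : ℕ∞) := (ENat.coe_toNat h).symm
    set j := (hitTime T A x).toNat with hjdef
    constructor
    · intro hlt
      refine ⟨?_, h⟩
      rw [← hit_gt, hj]
      rw [Nat.cast_lt]
      rw [Nat.floor_lt (div_nonneg ht.le ha.le)]
      rw [div_lt_iff₀ ha]
      linarith [hlt]
    · rintro ⟨hS, -⟩
      rw [← hit_gt, hj, Nat.cast_lt, Nat.floor_lt (div_nonneg ht.le ha.le), div_lt_iff₀ ha] at hS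
      linarith

theorem return_time_exponential_iff_hitting_time_exponential {X : Type*} [MeasurableSpace X]
    (μ : Measure X) [IsProbabilityMeasure μ] (T : X → X) (hE : Ergodic T μ)
    (A : ℕ → Set X) (hA : ∀ n, MeasurableSet (A n)) (hpos : ∀ n, 0 < μ (A n))
    (hshr : Tendsto (fun n => (μ (A n)).toReal) atTop (nhds 0)) :
    (∀ t : ℝ, 0 < t →
        Tendsto (fun n =>
          ((ProbabilityTheory.cond μ (A n))
            {x | t < (μ (A n)).toReal * ((hitTime T (A n) x).toNat : ℝ)}).toReal)
          atTop (nhds (Real.exp (-t)))) ↔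
      (∀ t : ℝ, 0 < t →
        Tendsto (fun n =>
          (μ {x | t < (μ (A n)).toReal * ((hitTime T (A n) x).toNat : ℝ)}).toReal)
          atTop (nhds (Real.exp (-t)))) := by
  have hT : Measurable T := hE.toMeasurePreserving.measurable
  set a : ℕ → ℝ := fun n => (μ (A n)).toReal with ha_def
  have ha : ∀ n, 0 < a n := fun n => ENNReal.toReal_pos (hpos n).ne' (measure_ne_top μ _)
  have hμ0 : ∀ n, μ (A n) ≠ 0 := fun n => (hpos n).ne'
  have hμt : ∀ n, μ (A n) ≠ ⊤ := fun n => measure_ne_top μ _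
  have hprob : ∀ n, IsProbabilityMeasure (ProbabilityTheory.cond μ (A n)) :=
    fun n => ProbabilityTheory.cond_isProbabilityMeasure (hμ0 n)
  set ψ : ℕ → ℕ → ℝ :=
    fun n k => ((ProbabilityTheory.cond μ (A n)) (hitSet T (A n) k)).toReal with hψ_def
  set φ : ℕ → ℕ → ℝ := fun n k => (μ (hitSet T (A n) k)).toReal with hφ_def
  have hNtop : ∀ n, {x | hitTime T (A n) x = ⊤} = {x | ∀ i : ℕ, 1 ≤ i → T^[i] x ∉ A n} := by
    intro n; ext x; simpa using hit_top_iff T (A n) x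
  have hN0 : ∀ n, μ {x | hitTime T (A n) x = ⊤} = 0 := by
    intro n; rw [hNtop n]; exact measure_never_hit hE (hA n) (hpos n)
  have hcondN0 : ∀ n, (ProbabilityTheory.cond μ (A n)) {x | hitTime T (A n) x = ⊤} = 0 := by
    intro n
    rw [ProbabilityTheory.cond_apply (hA n)]
    have : μ (A n ∩ {x | hitTime T (A n) x = ⊤}) = 0 :=
      measure_mono_null Set.inter_subset_right (hN0 n)
    rw [this, mul_zero]
  have hψ0 : ∀ n k, 0 ≤ ψ n k := fun n k => ENNReal.toReal_nonneg
  have hψanti : ∀ n, Antitone (ψ n) := by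
    intro n k l hkl
    haveI := hprob n
    exact ENNReal.toReal_mono (measure_ne_top _ _)
      (measure_mono (hitSet_antitone T (A n) hkl))
  have hφ0 : ∀ n, φ n 0 = 1 := by
    intro n
    rw [hφ_def]
    simp [hitSet_zero]
  have hrec : ∀ n k, φ n (k+1) = φ n k - a n * ψ n k := by
    intro n k
    have hkey := measure_hitSet_rec hE.toMeasurePreserving (hA n) k
    have htr : (μ (hitSet T (A n) k)).toReal
        = (μ (hitSet T (A n) (k+1))).toReal + (μ (A n ∩ hitSet T (A n) k)).toReal := by
      rw [hkey, ENNReal.toReal_add (measure_ne_top μ _) (measure_ne_top μ _)]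
    have haψ : a n * ψ n k = (μ (A n ∩ hitSet T (A n) k)).toReal := by
      rw [hψ_def]
      simp only
      rw [ProbabilityTheory.cond_apply (hA n), ENNReal.toReal_mul, ENNReal.toReal_inv]
      rw [ha_def]
      field_simp
      rw [mul_comm]
      exact mul_div_cancel_right₀ _ (ha n).ne'
    rw [haψ]
    simp only [hφ_def]
    linarith
  have hφlim : ∀ n, Tendsto (φ n) atTop (𝓝 0) := by
    intro n
    have h1 := tendsto_measure_iInter_atTop
      (fun k => (measurable_hitSet hT (hA n) k).nullMeasurableSet)
      (hitSet_antitone T (A n)) ⟨0, measure_ne_top μ _⟩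
    rw [iInter_hitSet, measure_never_hit hE (hA n) (hpos n)] at h1
    have h2 := (ENNReal.tendsto_toReal (by simp : (0:ENNReal) ≠ ⊤)).comp h1
    simpa [Function.comp_def, hφ_def] using h2
  have habs := abstract_main a ha hshr ψ φ hψ0 hψanti hφ0 hrec hφlim
  have hψeq : ∀ t : ℝ, 0 < t → ∀ n,
      ((ProbabilityTheory.cond μ (A n))
        {x | t < a n * ((hitTime T (A n) x).toNat : ℝ)}).toReal = ψ n ⌊t / a n⌋₊ := by
    intro t ht n
    rw [statement_set_eq T (A n) (a n) (ha n) t ht, measure_diff_null (hcondN0 n)]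
  have hφeq : ∀ t : ℝ, 0 < t → ∀ n,
      (μ {x | t < a n * ((hitTime T (A n) x).toNat : ℝ)}).toReal = φ n ⌊t / a n⌋₊ := by
    intro t ht n
    rw [statement_set_eq T (A n) (a n) (ha n) t ht, measure_diff_null (hN0 n)]
  constructor
  · intro H t ht
    refine ((habs.1 fun s hs => (H s hs).congr fun n => hψeq s hs n) t ht).congr fun n => ?_
    exact (hφeq t ht n).symm
  · intro H t ht
    refine ((habs.2 fun s hs => (H s hs).congr fun n => hφeq s hs n) t ht).congr fun n => ?_
    exact (hψeq t ht n).symm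
end

section
/- In a ψ-mixing system, for any m, k ∈ ℕ, the sweep-out sequence satisfies the almost-subadditivity log s_A(m + k + n_A) ≤ log s_A(m) + log s_A(k) + log(1 + ψ_1), where n_A is the least integer with A ∈ B_{n_A}. -/
open MeasureTheory Filter Topology

theorem sweep_almost_subadditive
    {X : Type*} [m0 : MeasurableSpace X] (μ : Measure X) [IsProbabilityMeasure μ]
    (T : X → X) (hE : Ergodic T μ)
    (𝔅 : ℕ → MeasurableSpace X) (h𝔅le : ∀ n, 𝔅 n ≤ m0) (h𝔅mono : Monotone 𝔅)
    (h𝔅T : ∀ n (S : Set X), MeasurableSet[𝔅 n] S → MeasurableSet[𝔅 (n + 1)] (T ⁻¹' S))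
    (ψ : ℕ → ℝ) (hψnonneg : ∀ n, 0 ≤ ψ n) (hψ0 : Tendsto ψ atTop (nhds 0))
    (hψ1 : ∀ n, ψ n ≤ ψ 1)
    (hmix : ∀ (n m k : ℕ) (S B : Set X), MeasurableSet[𝔅 n] S → MeasurableSet[𝔅 m] B →
      |(μ (S ∩ T^[k + n] ⁻¹' B)).toReal - (μ S).toReal * (μ B).toReal| ≤
        ψ k * (μ S).toReal * (μ B).toReal)
    (A : Set X) (hpos : 0 < μ A) (nA : ℕ) (hnA : MeasurableSet[𝔅 nA] A)
    (hnAmin : ∀ m, MeasurableSet[𝔅 m] A → nA ≤ m)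
    (hs : ∀ k : ℕ, 0 < sweep μ T A k) (m k : ℕ) :
    Real.log (sweep μ T A (m + k + nA)) ≤
      Real.log (sweep μ T A m) + Real.log (sweep μ T A k) + Real.log (1 + ψ 1) := by
  -- Notation for the intersections
  set Sm : ℕ → Set X := fun j => ⋂ i ∈ Finset.range j, T^[i] ⁻¹' Aᶜ with hSm
  -- measurability of iterated preimages
  have hiter : ∀ i : ℕ, MeasurableSet[𝔅 (nA + i)] (T^[i] ⁻¹' Aᶜ) := by
    intro i
    induction i with
    | zero => simpa using hnA.compl
    | succ n ih =>
      have : T^[n + 1] ⁻¹' Aᶜ = T ⁻¹' (T^[n] ⁻¹' Aᶜ) := by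
        rw [Function.iterate_succ, Set.preimage_comp]
      rw [this, show nA + (n + 1) = (nA + n) + 1 from rfl]
      exact h𝔅T _ _ ih
  have hSmeas : ∀ j : ℕ, MeasurableSet[𝔅 (j + nA)] (Sm j) := by
    intro j
    apply MeasurableSet.biInter (Set.to_countable _)
    intro i hi
    have hi' : i ∈ Finset.range j := hi
    have : nA + i ≤ j + nA := by
      have := Finset.mem_range.mp hi'
      omega
    exact h𝔅mono this _ (hiter i)
  -- inclusion
  have hsub : Sm (m + k + nA) ⊆ Sm m ∩ T^[m + nA] ⁻¹' (Sm k) := by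
    intro x hx
    simp only [hSm, Set.mem_iInter, Set.mem_inter_iff, Set.mem_preimage,
      Finset.mem_range] at hx ⊢
    constructor
    · intro i hi
      exact hx i (by omega)
    · intro i hi
      rw [← Function.iterate_add_apply]
      exact hx (i + (m + nA)) (by omega)
  -- finiteness
  have hfin : ∀ (B : Set X), μ B ≠ ⊤ := fun B => (measure_lt_top μ B).ne
  -- step 1: monotonicity
  have h1 : sweep μ T A (m + k + nA) ≤ (μ (Sm m ∩ T^[m + nA] ⁻¹' (Sm k))).toReal := by
    apply ENNReal.toReal_mono (hfin _)
    exact measure_mono hsub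
  -- step 2: mixing with gap 0
  have hmix' := hmix (m + nA) (k + nA) 0 (Sm m) (Sm k) (hSmeas m) (hSmeas k)
  rw [zero_add] at hmix'
  have h2 : (μ (Sm m ∩ T^[m + nA] ⁻¹' (Sm k))).toReal ≤
      (1 + ψ 1) * ((μ (Sm m)).toReal * (μ (Sm k)).toReal) := by
    have habs := abs_le.mp hmix'
    have hψ01 : ψ 0 ≤ ψ 1 := hψ1 0
    have hnn : 0 ≤ (μ (Sm m)).toReal * (μ (Sm k)).toReal := by positivity
    nlinarith [habs.2]
  have hsweepm : sweep μ T A m = (μ (Sm m)).toReal := rfl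
  have hsweepk : sweep μ T A k = (μ (Sm k)).toReal := rfl
  have key : sweep μ T A (m + k + nA) ≤ (1 + ψ 1) * (sweep μ T A m * sweep μ T A k) := by
    rw [hsweepm, hsweepk]; exact h1.trans h2
  have hψ1pos : 0 < 1 + ψ 1 := by have := hψnonneg 1; linarith
  have hprodpos : 0 < (1 + ψ 1) * (sweep μ T A m * sweep μ T A k) := by
    have := hs m; have := hs k; positivity
  calc Real.log (sweep μ T A (m + k + nA))
      ≤ Real.log ((1 + ψ 1) * (sweep μ T A m * sweep μ T A k)) :=
        Real.log_le_log (hs _) key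
    _ = Real.log (sweep μ T A m) + Real.log (sweep μ T A k) + Real.log (1 + ψ 1) := by
        rw [Real.log_mul hψ1pos.ne' (by have := hs m; have := hs k; positivity),
          Real.log_mul (hs m).ne' (hs k).ne']
        ring
end

section
/- In a ψ-mixing system, for every positively-measured A with s_A(k) > 0 for all k, the escape rate ρ_A := lim_{k→∞} -log(s_A(k))/k exists (possibly equal to +∞). -/
open MeasureTheory Filter Topology

theorem escape_rate_exists
    {X : Type*} [m0 : MeasurableSpace X] (μ : Measure X) [IsProbabilityMeasure μ]
    (T : X → X) (hE : Ergodic T μ)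
    (𝔅 : ℕ → MeasurableSpace X) (h𝔅le : ∀ n, 𝔅 n ≤ m0) (h𝔅mono : Monotone 𝔅)
    (h𝔅T : ∀ n (S : Set X), MeasurableSet[𝔅 n] S → MeasurableSet[𝔅 (n + 1)] (T ⁻¹' S))
    (ψ : ℕ → ℝ) (hψnonneg : ∀ n, 0 ≤ ψ n) (hψ0 : Tendsto ψ atTop (nhds 0))
    (hψ1 : ∀ n, ψ n ≤ ψ 1)
    (hmix : ∀ (n m k : ℕ) (S B : Set X), MeasurableSet[𝔅 n] S → MeasurableSet[𝔅 m] B →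
      |(μ (S ∩ T^[k + n] ⁻¹' B)).toReal - (μ S).toReal * (μ B).toReal| ≤
        ψ k * (μ S).toReal * (μ B).toReal)
    (A : Set X) (hpos : 0 < μ A) (nA : ℕ) (hnA : MeasurableSet[𝔅 nA] A)
    (hnAmin : ∀ m, MeasurableSet[𝔅 m] A → nA ≤ m)
    (hs : ∀ k : ℕ, 0 < sweep μ T A k) :
    ∃ ρ : EReal,
      Tendsto (fun k : ℕ => ((-Real.log (sweep μ T A k) / k : ℝ) : EReal))
        atTop (nhds ρ) := by
  classical
  set s : ℕ → ℝ := sweep μ T A with hs_def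
  set E : ℕ → Set X := fun k => ⋂ i ∈ Finset.range k, T^[i] ⁻¹' Aᶜ with hE_def
  have hsE : ∀ k, s k = (μ (E k)).toReal := fun k => rfl
  set a : ℕ → ℝ := fun k => -Real.log (s k) with ha_def
  set c : ℝ := Real.log (1 + ψ 0) with hc_def
  have hψ0' : (0:ℝ) ≤ ψ 0 := hψnonneg 0
  have hc0 : 0 ≤ c := Real.log_nonneg (by linarith)
  have hgoal0 : ∀ ρ : EReal, Tendsto (fun k : ℕ => ((a k / k : ℝ) : EReal)) atTop (𝓝 ρ) →
      ∃ ρ : EReal, Tendsto (fun k : ℕ => ((-Real.log (s k) / k : ℝ) : EReal))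
        atTop (𝓝 ρ) := fun ρ h => ⟨ρ, h⟩
  clear_value s E a c
  have hsle1 : ∀ k, s k ≤ 1 := by
    intro k
    rw [hsE]
    have h1 : μ (E k) ≤ 1 := prob_le_one
    calc (μ (E k)).toReal ≤ (1 : ENNReal).toReal := ENNReal.toReal_mono ENNReal.one_ne_top h1
      _ = 1 := by simp
  have anonneg : ∀ k, 0 ≤ a k := by
    intro k
    simp only [ha_def, neg_nonneg]
    exact Real.log_nonpos (hs k).le (hsle1 k)
  -- measurability
  have measAc : ∀ i, MeasurableSet[𝔅 (nA + i)] (T^[i] ⁻¹' Aᶜ) := by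
    intro i
    induction i with
    | zero => simpa using hnA.compl
    | succ i ih =>
        have h1 : T^[i+1] ⁻¹' Aᶜ = T ⁻¹' (T^[i] ⁻¹' Aᶜ) := by
          rw [Function.iterate_succ]; rfl
        rw [h1]
        exact h𝔅T _ _ ih
  have measE : ∀ k, MeasurableSet[𝔅 (nA + k)] (E k) := by
    intro k
    simp only [hE_def]
    apply Finset.measurableSet_biInter
    intro i hi
    have hik : i < k := Finset.mem_range.1 hi
    exact h𝔅mono (by omega : nA + i ≤ nA + k) _ (measAc i)
  -- inclusion
  have hsub : ∀ j m, E (j + nA + m) ⊆ E j ∩ T^[nA + j] ⁻¹' E m := by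
    intro j m x hx
    simp only [hE_def, Set.mem_iInter, Finset.mem_range, Set.mem_preimage,
      Set.mem_inter_iff] at hx ⊢
    refine ⟨fun i hi => hx i (by omega), fun i hi => ?_⟩
    have h2 := hx (i + (nA + j)) (by omega)
    rwa [Function.iterate_add_apply] at h2
  -- submultiplicativity
  have key : ∀ j m, s (j + nA + m) ≤ (1 + ψ 0) * (s j * s m) := by
    intro j m
    have h1 : s (j + nA + m) ≤ (μ (E j ∩ T^[0 + (nA + j)] ⁻¹' E m)).toReal := by
      rw [hsE]
      refine ENNReal.toReal_mono (measure_ne_top μ _) (measure_mono ?_)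
      simpa using hsub j m
    have h2 := hmix (nA + j) (nA + m) 0 (E j) (E m) (measE j) (measE m)
    rw [← hsE, ← hsE] at h2
    have h3 := (abs_le.1 h2).2
    nlinarith [hs j, hs m]
  have keylog : ∀ j m, a j + a m - c ≤ a (j + nA + m) := by
    intro j m
    have hsj := hs j; have hsm := hs m; have hsJM := hs (j + nA + m)
    have h2 : Real.log (s (j + nA + m)) ≤ c + (Real.log (s j) + Real.log (s m)) := by
      calc Real.log (s (j + nA + m)) ≤ Real.log ((1 + ψ 0) * (s j * s m)) :=
            Real.log_le_log hsJM (key j m)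
        _ = c + (Real.log (s j) + Real.log (s m)) := by
            rw [Real.log_mul (by linarith : (0:ℝ) < 1 + ψ 0).ne'
                (mul_pos (hs j) (hs m)).ne',
              Real.log_mul (hs j).ne' (hs m).ne', hc_def]
    simp only [ha_def]
    linarith
  -- iteration
  have iter : ∀ m j q : ℕ, a j + q * (a m - c) ≤ a (j + q * (m + nA)) := by
    intro m j q
    induction q with
    | zero => simp
    | succ q ih =>
        have h1 := keylog (j + q * (m + nA)) m
        have h2 : j + q * (m + nA) + nA + m = j + (q + 1) * (m + nA) := by ring
        rw [h2] at h1
        push_cast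
        push_cast at ih
        linarith
  -- lower bound lemma
  have LB : ∀ m : ℕ, 1 ≤ m → ∀ r : ℝ, r < (a m - c) / (m + nA) →
      ∀ᶠ k : ℕ in atTop, r ≤ a k / k := by
    intro m hm r hr
    set P : ℕ := m + nA with hP
    have hPpos : 0 < P := by omega
    have hPR : (0:ℝ) < P := by exact_mod_cast hPpos
    set β : ℝ := a m - c with hβ
    clear_value P β
    have hq : ∀ k : ℕ, ((k / P : ℕ) : ℝ) * β ≤ a k := by
      intro k
      have h1 := iter m (k % P) (k / P)
      have h2 : k % P + (k / P) * (m + nA) = k := by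
        rw [← hP]; exact Nat.mod_add_div' k P
      rw [h2] at h1
      have h3 := anonneg (k % P)
      rw [hβ]
      linarith
    have hqP : ∀ k : ℕ, ((k / P : ℕ) : ℝ) * P = (k : ℝ) - ((k % P : ℕ) : ℝ) := by
      intro k
      have h2 : (k % P : ℕ) + (k / P) * P = k := Nat.mod_add_div' k P
      have h2' : ((k % P : ℕ) : ℝ) + ((k / P : ℕ) : ℝ) * P = k := by exact_mod_cast h2
      linarith
    have hmodlt : ∀ k : ℕ, ((k % P : ℕ) : ℝ) < P := by
      intro k
      exact_mod_cast Nat.mod_lt k hPpos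
    have hPc : ((P : ℕ) : ℝ) = (m : ℝ) + nA := by rw [hP]; push_cast; ring
    have hr' : r < β / (P : ℝ) := by rw [hPc]; exact hr
    rcases le_or_gt 0 β with hβpos | hβneg
    · -- β ≥ 0
      have hten : Tendsto (fun k : ℕ => β * ((k : ℝ) - P) / (P * k)) atTop (𝓝 (β / P)) := by
        have h0 : Tendsto (fun k : ℕ => (P : ℝ) / k) atTop (𝓝 0) :=
          tendsto_const_div_atTop_nhds_zero_nat (P : ℝ)
        have h1 : Tendsto (fun k : ℕ => β / P * (1 - (P : ℝ) / k)) atTop (𝓝 (β / P)) := by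
          have h1' : Tendsto (fun k : ℕ => (1 : ℝ) - (P : ℝ) / k) atTop (𝓝 (1 - 0)) :=
            (tendsto_const_nhds (x := (1:ℝ))).sub h0
          have := h1'.const_mul (β / (P : ℝ))
          simpa using this
        refine h1.congr' ?_
        filter_upwards [eventually_gt_atTop 0] with k hk
        have hkR : (0:ℝ) < k := by exact_mod_cast hk
        field_simp
        try ring
      have hev := hten.eventually (eventually_gt_nhds hr')
      filter_upwards [hev, eventually_gt_atTop 0] with k hk1 hk2
      have hkR : (0:ℝ) < k := by exact_mod_cast hk2
      have hj := (hmodlt k).le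
      have hj0 : (0:ℝ) ≤ ((k % P : ℕ) : ℝ) := by positivity
      have hmono : β * ((k : ℝ) - P) / (P * k) ≤ ((k / P : ℕ) : ℝ) * β / k := by
        rw [div_le_div_iff₀ (by positivity) hkR]
        have h4 : 0 ≤ β * (k : ℝ) * ((P : ℝ) - ((k % P : ℕ) : ℝ)) :=
          mul_nonneg (mul_nonneg hβpos hkR.le) (by linarith)
        have h5 : ((k / P : ℕ) : ℝ) * β * ((P : ℝ) * k) =
            β * (k : ℝ) * ((k : ℝ) - ((k % P : ℕ) : ℝ)) := by
          linear_combination (β * (k : ℝ)) * hqP k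
        linarith
      have hdiv : ((k / P : ℕ) : ℝ) * β / k ≤ a k / k := by
        apply div_le_div_of_nonneg_right (hq k) hkR.le
      linarith
    · -- β < 0 : constant bound
      filter_upwards [eventually_gt_atTop 0] with k hk2
      have hkR : (0:ℝ) < k := by exact_mod_cast hk2
      have hble : β / P ≤ ((k / P : ℕ) : ℝ) * β / k := by
        rw [div_le_div_iff₀ hPR hkR]
        have hj0 : (0:ℝ) ≤ ((k % P : ℕ) : ℝ) := by positivity
        have h4 : β * ((k % P : ℕ) : ℝ) ≤ 0 := mul_nonpos_of_nonpos_of_nonneg hβneg.le hj0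
        have h5 : ((k / P : ℕ) : ℝ) * β * (P : ℝ) =
            β * (k : ℝ) - β * ((k % P : ℕ) : ℝ) := by
          linear_combination β * hqP k
        linarith
      have hdiv : ((k / P : ℕ) : ℝ) * β / k ≤ a k / k := by
        apply div_le_div_of_nonneg_right (hq k) hkR.le
      linarith
  -- final assembly
  set Φ : Set ℝ := {x | ∃ m : ℕ, 1 ≤ m ∧ x = (a m - c) / (m + nA)} with hΦ_def
  have hΦne : Φ.Nonempty := ⟨(a 1 - c) / (1 + nA), 1, le_refl 1, by norm_num⟩
  by_cases hbdd : BddAbove Φ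
  · set S := sSup Φ with hS_def
    clear_value S
    apply hgoal0 (S : EReal)
    rw [EReal.tendsto_coe]
    rw [tendsto_order]
    constructor
    · intro r hr
      obtain ⟨x, hxΦ, hrx⟩ := exists_lt_of_lt_csSup hΦne (hS_def ▸ hr)
      obtain ⟨m, hm1, rfl⟩ := hxΦ
      have hLB := LB m hm1 ((r + (a m - c) / (m + nA)) / 2) (by linarith)
      filter_upwards [hLB] with k hk
      linarith
    · intro b hb
      have hub : ∀ᶠ k : ℕ in atTop, a k / k ≤ S + (S * nA + c) / k := by
        filter_upwards [eventually_ge_atTop 1] with k hk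
        have hkR : (0:ℝ) < k := by exact_mod_cast hk
        have hmem : (a k - c) / (k + nA) ∈ Φ := ⟨k, hk, rfl⟩
        have hle : (a k - c) / ((k : ℝ) + nA) ≤ S := hS_def ▸ le_csSup hbdd hmem
        have hkna : (0:ℝ) < (k : ℝ) + nA := by positivity
        rw [div_le_iff₀ hkna] at hle
        rw [div_le_iff₀ hkR]
        have : (S + (S * nA + c) / k) * k = S * k + (S * nA + c) := by
          field_simp
        rw [this]
        linarith
      have hten : Tendsto (fun k : ℕ => S + (S * nA + c) / k) atTop (𝓝 S) := by
        have h0 := tendsto_const_div_atTop_nhds_zero_nat (S * nA + c)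
        have h1' : Tendsto (fun k : ℕ => S + (S * nA + c) / k) atTop (𝓝 (S + 0)) :=
          (tendsto_const_nhds (x := S)).add h0
        simpa using h1'
      filter_upwards [hub, hten.eventually (eventually_lt_nhds hb)] with k h1 h2
      linarith
  · apply hgoal0 ⊤
    rw [EReal.tendsto_nhds_top_iff_real]
    intro x
    obtain ⟨y, hyΦ, hxy⟩ := not_bddAbove_iff.1 hbdd x
    obtain ⟨m, hm1, rfl⟩ := hyΦ
    have hLB := LB m hm1 ((x + (a m - c) / (m + nA)) / 2) (by linarith)
    filter_upwards [hLB] with k hk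
    have : x < a k / k := by linarith
    exact_mod_cast this
end

section
/- In a ψ-mixing system, for ε < 0.1 and A ∈ A_ε, the escape rate satisfies the upper bound ρ_A ≤ -(1/r_A)·log q_A, where q_A := 1 - r_A μ(A)(1 + ψ_{ℓ_A} + 2 r_A μ(A)), via the inequality s_A(m·r_A) ≥ q_A^m for all m ≥ 1. -/
open MeasureTheory Filter Topology

set_option maxHeartbeats 1600000 in
theorem escape_rate_upper_bound
    {X : Type*} [m0 : MeasurableSpace X] (μ : Measure X) [IsProbabilityMeasure μ]
    (T : X → X) (hE : Ergodic T μ)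
    (𝔅 : ℕ → MeasurableSpace X) (h𝔅le : ∀ n, 𝔅 n ≤ m0) (h𝔅mono : Monotone 𝔅)
    (h𝔅T : ∀ n (S : Set X), MeasurableSet[𝔅 n] S → MeasurableSet[𝔅 (n + 1)] (T ⁻¹' S))
    (ψ : ℕ → ℝ) (hψnonneg : ∀ n, 0 ≤ ψ n) (hψ0 : Tendsto ψ atTop (nhds 0))
    (hψ1 : ∀ n, ψ n ≤ ψ 1)
    (hmix : ∀ (n m k : ℕ) (S B : Set X), MeasurableSet[𝔅 n] S → MeasurableSet[𝔅 m] B →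
      |(μ (S ∩ T^[k + n] ⁻¹' B)).toReal - (μ S).toReal * (μ B).toReal| ≤
        ψ k * (μ S).toReal * (μ B).toReal)
    (A : Set X) (hpos : 0 < μ A) (nA : ℕ) (hnA : MeasurableSet[𝔅 nA] A)
    (hnAmin : ∀ m, MeasurableSet[𝔅 m] A → nA ≤ m)
    (hs : ∀ k : ℕ, 0 < sweep μ T A k)
    (ε : ℝ) (hε : 0 < ε) (hε1 : ε < 0.1)
    (ℓ : ℕ) (hℓψ : ψ ℓ < ε) (hℓμ : ((nA + ℓ : ℕ) : ℝ) * (μ A).toReal < ε)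
    (hcorr : (nA : ℝ) *
        (⨆ i ∈ Finset.Icc 1 nA, (μ (A ∩ T^[i] ⁻¹' A)).toReal / (μ A).toReal) < ε)
    (ρ : ℝ)
    (hρ : Tendsto (fun k : ℕ => -Real.log (sweep μ T A k) / k) atTop (nhds ρ)) :
    (∀ m : ℕ, 1 ≤ m →
        sweep μ T A (m * (nA + ℓ)) ≥
          (1 - ((nA + ℓ : ℕ) : ℝ) * (μ A).toReal *
            (1 + ψ ℓ + 2 * ((nA + ℓ : ℕ) : ℝ) * (μ A).toReal)) ^ m) ∧
      ρ ≤ -(1 / ((nA + ℓ : ℕ) : ℝ)) *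
        Real.log (1 - ((nA + ℓ : ℕ) : ℝ) * (μ A).toReal *
          (1 + ψ ℓ + 2 * ((nA + ℓ : ℕ) : ℝ) * (μ A).toReal)) := by

  classical
  have hMP : MeasurePreserving T μ μ := hE.toMeasurePreserving
  have hA : MeasurableSet A := h𝔅le nA A hnA
  have hfin : ∀ S : Set X, μ S ≠ ⊤ := fun S => measure_ne_top μ S
  set a : ℝ := (μ A).toReal with hadef
  set p : ℝ := ψ ℓ with hpdef
  set r : ℕ := nA + ℓ with hrdef
  set E : ℕ → Set X := fun k => ⋂ i ∈ Finset.range k, T^[i] ⁻¹' Aᶜ with hEdef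
  have hsE : ∀ k, sweep μ T A k = (μ (E k)).toReal := by
    intro k; simp only [hEdef]; rfl
  have ha0 : 0 < a := by
    rw [hadef]; exact ENNReal.toReal_pos hpos.ne' (hfin A)
  have hp0 : 0 ≤ p := hψnonneg ℓ
  -- degenerate case r = 0 is contradictory
  rcases Nat.eq_zero_or_pos r with hr0 | hrpos
  · exfalso
    have hnA0 : nA = 0 := by omega
    have hl0 : ℓ = 0 := by omega
    have hnA' : MeasurableSet[𝔅 0] A := hnA0 ▸ hnA
    have h := hmix 0 0 0 A Aᶜ hnA' hnA'.compl
    have hid : A ∩ T^[0 + 0] ⁻¹' Aᶜ = (∅ : Set X) := by simp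
    rw [hid, measure_empty] at h
    simp only [ENNReal.toReal_zero, zero_sub, abs_neg] at h
    rw [← hadef, abs_of_nonneg (mul_nonneg ha0.le ENNReal.toReal_nonneg)] at h
    have hE1 : E 1 = Aᶜ := by
      simp [hEdef]
    have hc1 : 0 < (μ Aᶜ).toReal := by
      have h9 := hs 1
      rw [hsE 1, hE1] at h9
      exact h9
    have hψ00 : ψ 0 < ε := by rw [← hl0]; exact hℓψ
    nlinarith [mul_pos ha0 hc1, hψnonneg 0]
  -- main case
  have hTk : ∀ k : ℕ, Measurable (T^[k]) := fun k => hMP.measurable.iterate k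
  have hEmeas : ∀ k, MeasurableSet (E k) := by
    intro k
    simp only [hEdef]
    exact Finset.measurableSet_biInter _ (fun i _ => (hA.compl.preimage (hTk i)))
  have hE0 : E 0 = Set.univ := by simp [hEdef]
  have hEsucc : ∀ k, E (k + 1) = E k ∩ T^[k] ⁻¹' Aᶜ := by
    intro k
    simp only [hEdef, Finset.range_add_one, Finset.set_biInter_insert]
    exact Set.inter_comm _ _
  have hEmono : ∀ {k l : ℕ}, k ≤ l → E l ⊆ E k := by
    intro k l hkl x hx
    simp only [hEdef, Set.mem_iInter, Finset.mem_range] at hx ⊢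
    exact fun i hi => hx i (lt_of_lt_of_le hi hkl)
  have hsmono : ∀ {k l : ℕ}, k ≤ l → sweep μ T A l ≤ sweep μ T A k := by
    intro k l hkl
    rw [hsE, hsE]
    exact ENNReal.toReal_mono (hfin _) (measure_mono (hEmono hkl))
  have hs0 : ∀ k, 0 ≤ sweep μ T A k := fun k => (hs k).le
  set aa : ℕ → ℝ := fun k => (μ (E k ∩ T^[k] ⁻¹' A)).toReal with haadef
  have haa0 : ∀ k, 0 ≤ aa k := fun k => ENNReal.toReal_nonneg
  have hstep : ∀ k, sweep μ T A k = sweep μ T A (k + 1) + aa k := by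
    intro k
    have h1 : μ (E k ∩ T^[k] ⁻¹' A) + μ (E k \ T^[k] ⁻¹' A) = μ (E k) :=
      measure_inter_add_diff _ (hA.preimage (hTk k))
    have h2 : E k \ T^[k] ⁻¹' A = E (k + 1) := by
      rw [hEsucc k, Set.diff_eq, Set.preimage_compl]
    rw [h2] at h1
    rw [hsE, hsE, ← h1, ENNReal.toReal_add (hfin _) (hfin _)]
    simp only [haadef]
    ring
  have haastep : ∀ k, aa (k + 1) ≤ aa k := by
    intro k
    have hsub : E (k + 1) ∩ T^[k + 1] ⁻¹' A ⊆ T ⁻¹' (E k ∩ T^[k] ⁻¹' A) := by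
      intro x hx
      obtain ⟨hx1, hx2⟩ := hx
      constructor
      · simp only [hEdef, Set.mem_iInter, Finset.mem_range] at hx1 ⊢
        intro i hi
        have h := hx1 (i + 1) (by omega)
        simp only [Set.mem_preimage] at h ⊢
        rwa [Function.iterate_succ_apply] at h
      · show T^[k] (T x) ∈ A
        rw [← Function.iterate_succ_apply]
        exact hx2
    have h1 : μ (E (k + 1) ∩ T^[k + 1] ⁻¹' A) ≤ μ (T ⁻¹' (E k ∩ T^[k] ⁻¹' A)) :=
      measure_mono hsub
    rw [hMP.measure_preimage ((hEmeas k).inter (hA.preimage (hTk k))).nullMeasurableSet] at h1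
    exact ENNReal.toReal_mono (hfin _) h1
  have haanti : Antitone aa := antitone_nat_of_succ_le haastep
  have hsum : ∀ k d, sweep μ T A k
      = sweep μ T A (k + d) + ∑ t ∈ Finset.Ico k (k + d), aa t := by
    intro k d
    induction d with
    | zero => simp
    | succ d ih =>
      rw [show k + (d + 1) = (k + d) + 1 from rfl,
        Finset.sum_Ico_succ_top (Nat.le_add_right k d)]
      have := hstep (k + d)
      linarith [ih]
  have hTA : ∀ i, MeasurableSet[𝔅 (nA + i)] (T^[i] ⁻¹' A) := by
    intro i
    induction i with
    | zero => simpa using hnA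
    | succ i ih =>
      have he : T^[i + 1] ⁻¹' A = T ⁻¹' (T^[i] ⁻¹' A) := by
        rw [Function.iterate_succ]
        rfl
      rw [he]
      exact h𝔅T _ _ ih
  have hEB : ∀ j, MeasurableSet[𝔅 (nA + j)] (E (j + 1)) := by
    intro j
    simp only [hEdef]
    refine Finset.measurableSet_biInter _ (fun i hi => ?_)
    have hi' : i ≤ j := by simpa [Nat.lt_succ_iff] using hi
    have h1 : MeasurableSet[𝔅 (nA + i)] (T^[i] ⁻¹' Aᶜ) := by
      rw [Set.preimage_compl]
      exact (hTA i).compl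
    exact h𝔅mono (by omega : nA + i ≤ nA + j) _ h1
  -- numeric setup
  set R : ℝ := (r : ℝ) * a with hRdef
  have hRe : R < ε := hℓμ
  have hR0 : 0 < R := by
    rw [hRdef]
    have : (0:ℝ) < (r:ℝ) := by exact_mod_cast hrpos
    positivity
  have hR01 : R < 0.1 := lt_trans hRe hε1
  have hp01 : p < 0.1 := lt_trans hℓψ hε1
  have haR : a ≤ R := by
    rw [hRdef]
    have h1 : (1:ℝ) ≤ (r:ℝ) := by exact_mod_cast hrpos
    nlinarith
  set β : ℝ := a * (1 + p + 2 * R) with hbdef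
  have hb0 : 0 < β := by rw [hbdef]; nlinarith
  set q : ℝ := 1 - R * (1 + p + 2 * R) with hqdef
  have hq0 : 0 < q := by rw [hqdef]; nlinarith
  have hq1 : q ≤ 1 := by rw [hqdef]; nlinarith
  have hrb : (r : ℝ) * β = R * (1 + p + 2 * R) := by rw [hbdef, hRdef]; ring
  -- Claim A : aa k ≤ β * sweep k
  have claimA : ∀ k, aa k ≤ β * sweep μ T A k := by
    intro k
    induction k using Nat.strong_induction_on with
    | _ k ih =>
    rcases lt_or_ge k r with hk | hk
    · -- short case : k < r
      have h1 : aa k ≤ a := by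
        simp only [haadef, hadef]
        refine ENNReal.toReal_mono (hfin _) ?_
        calc μ (E k ∩ T^[k] ⁻¹' A) ≤ μ (T^[k] ⁻¹' A) := measure_mono Set.inter_subset_right
        _ = μ A := (hMP.iterate k).measure_preimage hA.nullMeasurableSet
      have h2 : 1 - (k : ℝ) * a ≤ sweep μ T A k := by
        have hcompl : (E k)ᶜ = ⋃ i ∈ Finset.range k, T^[i] ⁻¹' A := by
          simp [hEdef, Set.compl_iInter]
        have hc : μ (E k)ᶜ ≤ (k : ENNReal) * μ A := by
          rw [hcompl]
          calc μ (⋃ i ∈ Finset.range k, T^[i] ⁻¹' A)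
              ≤ ∑ i ∈ Finset.range k, μ (T^[i] ⁻¹' A) := measure_biUnion_finset_le _ _
          _ = ∑ i ∈ Finset.range k, μ A := by
              exact Finset.sum_congr rfl fun i _ =>
                (hMP.iterate i).measure_preimage hA.nullMeasurableSet
          _ = (k : ENNReal) * μ A := by
              rw [Finset.sum_const, Finset.card_range, nsmul_eq_mul]
        have h3 : (μ (E k)ᶜ).toReal ≤ (k : ℝ) * a := by
          have h4 := ENNReal.toReal_mono
            (ENNReal.mul_ne_top (ENNReal.natCast_ne_top k) (hfin A)) hc
          rwa [ENNReal.toReal_mul, ENNReal.toReal_natCast, ← hadef] at h4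
        have h5 : μ (E k) + μ (E k)ᶜ = 1 := by
          rw [measure_add_measure_compl (hEmeas k), measure_univ]
        have h6 : (μ (E k)).toReal + (μ (E k)ᶜ).toReal = 1 := by
          rw [← ENNReal.toReal_add (hfin _) (hfin _), h5, ENNReal.toReal_one]
        rw [hsE]
        linarith
      have hka : (k : ℝ) * a ≤ R - a := by
        have hk' : (k : ℝ) ≤ (r : ℝ) - 1 := by
          have h7 : (k : ℝ) + 1 ≤ (r : ℝ) := by exact_mod_cast hk
          linarith
        rw [hRdef]
        nlinarith
      have hskey : 1 - R + a ≤ sweep μ T A k := by linarith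
      have hone : 1 ≤ (1 + p + 2 * R) * (1 - R + a) := by nlinarith
      calc aa k ≤ a := h1
      _ ≤ β * (1 - R + a) := by
          rw [hbdef]
          nlinarith [mul_le_mul_of_nonneg_left hone ha0.le]
      _ ≤ β * sweep μ T A k := mul_le_mul_of_nonneg_left hskey hb0.le
    · -- long case : r ≤ k
      set j : ℕ := k - r with hjdef
      have hkj : k = ℓ + (nA + j) := by omega
      have hjk : j + 1 ≤ k := by omega
      have hmx := hmix (nA + j) nA ℓ (E (j + 1)) A (hEB j) hnA
      rw [← hkj, ← hsE, ← hadef, ← hpdef] at hmx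
      have h1 : aa k ≤ (μ (E (j + 1) ∩ T^[k] ⁻¹' A)).toReal := by
        simp only [haadef]
        exact ENNReal.toReal_mono (hfin _)
          (measure_mono (Set.inter_subset_inter_left _ (hEmono hjk)))
      have h2 : (μ (E (j + 1) ∩ T^[k] ⁻¹' A)).toReal
          ≤ (1 + p) * (sweep μ T A (j + 1) * a) := by
        have h8 := (abs_le.mp hmx).2
        nlinarith [h8]
      have hsumk := hsum (j + 1) (k - (j + 1))
      rw [show (j + 1) + (k - (j + 1)) = k by omega] at hsumk
      have hsumle : ∑ t ∈ Finset.Ico (j + 1) k, aa t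
          ≤ ((r : ℝ) - 1) * (β * sweep μ T A (j + 1)) := by
        calc ∑ t ∈ Finset.Ico (j + 1) k, aa t
            ≤ ∑ _t ∈ Finset.Ico (j + 1) k, β * sweep μ T A (j + 1) := by
              refine Finset.sum_le_sum fun t ht => ?_
              obtain ⟨ht1, ht2⟩ := Finset.mem_Ico.mp ht
              calc aa t ≤ β * sweep μ T A t := ih t ht2
              _ ≤ β * sweep μ T A (j + 1) :=
                  mul_le_mul_of_nonneg_left (hsmono ht1) hb0.le
        _ = ((r : ℝ) - 1) * (β * sweep μ T A (j + 1)) := by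
            rw [Finset.sum_const, Nat.card_Ico, nsmul_eq_mul]
            congr 1
            have : k - (j + 1) = r - 1 := by omega
            rw [this, Nat.cast_sub hrpos, Nat.cast_one]
      have hsj : sweep μ T A (j + 1) * (1 - ((r : ℝ) - 1) * β) ≤ sweep μ T A k := by
        nlinarith [hsumk, hsumle]
      have hsj0 : 0 ≤ sweep μ T A (j + 1) := hs0 _
      have hc2 : (1 + p + 2 * R) ^ 2 ≤ 2 := by nlinarith
      have hbr : (1 + p) * a ≤ β * (1 - ((r : ℝ) - 1) * β) := by
        have hrb1 : ((r : ℝ) - 1) * β = R * (1 + p + 2 * R) - β := by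
          rw [hbdef, hRdef]; ring
        rw [hrb1, hbdef]
        nlinarith [mul_nonneg (mul_nonneg ha0.le hR0.le)
          (by linarith : (0:ℝ) ≤ 2 - (1 + p + 2 * R) ^ 2),
          sq_nonneg (a * (1 + p + 2 * R))]
      calc aa k ≤ (1 + p) * (sweep μ T A (j + 1) * a) := le_trans h1 h2
      _ ≤ β * (1 - ((r : ℝ) - 1) * β) * sweep μ T A (j + 1) := by
          nlinarith [mul_le_mul_of_nonneg_right hbr hsj0]
      _ ≤ β * sweep μ T A k := by
          nlinarith [mul_le_mul_of_nonneg_left hsj hb0.le]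
  -- Claim B : one block step
  have claimB : ∀ k, q * sweep μ T A k ≤ sweep μ T A (k + r) := by
    intro k
    have hsumk := hsum k r
    have hsumle : ∑ t ∈ Finset.Ico k (k + r), aa t ≤ (r : ℝ) * (β * sweep μ T A k) := by
      calc ∑ t ∈ Finset.Ico k (k + r), aa t
          ≤ ∑ _t ∈ Finset.Ico k (k + r), β * sweep μ T A k := by
            refine Finset.sum_le_sum fun t ht => ?_
            obtain ⟨ht1, _⟩ := Finset.mem_Ico.mp ht
            exact le_trans (haanti ht1) (claimA k)
      _ = (r : ℝ) * (β * sweep μ T A k) := by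
          rw [Finset.sum_const, Nat.card_Ico, Nat.add_sub_cancel_left, nsmul_eq_mul]
    have hq' : q * sweep μ T A k = sweep μ T A k - (r : ℝ) * β * sweep μ T A k := by
      rw [hqdef, hrb]; ring
    nlinarith [hsumk, hsumle, hq']
  -- Claim C : iterate
  have claimC : ∀ m : ℕ, q ^ m ≤ sweep μ T A (m * r) := by
    intro m
    induction m with
    | zero =>
      rw [hsE]
      simp [hE0]
    | succ m ih =>
      have h1 := claimB (m * r)
      have h2 : q * q ^ m ≤ q * sweep μ T A (m * r) :=
        mul_le_mul_of_nonneg_left ih hq0.le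
      calc q ^ (m + 1) = q * q ^ m := by ring
      _ ≤ q * sweep μ T A (m * r) := h2
      _ ≤ sweep μ T A (m * r + r) := h1
      _ = sweep μ T A ((m + 1) * r) := by rw [Nat.succ_mul]
  have hqeq : (1 - R * (1 + p + 2 * (r : ℝ) * a)) = q := by
    rw [hqdef, hRdef]; ring
  constructor
  · intro m _
    rw [ge_iff_le, hqeq]
    exact claimC m
  · -- limit bound
    have hr0' : (0:ℝ) < (r : ℝ) := by exact_mod_cast hrpos
    rw [hqeq]
    have hcomp : Tendsto (fun m : ℕ => m * r) atTop atTop := by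
      refine tendsto_atTop_mono (fun m => ?_) tendsto_id
      calc m = m * 1 := (mul_one m).symm
      _ ≤ m * r := Nat.mul_le_mul_left m hrpos
    have hρ' : Tendsto (fun m : ℕ => -Real.log (sweep μ T A (m * r)) / ((m * r : ℕ) : ℝ))
        atTop (nhds ρ) := hρ.comp hcomp
    refine le_of_tendsto hρ' ?_
    filter_upwards [eventually_ge_atTop 1] with m hm
    have hm0 : (0:ℝ) < (m : ℝ) := by exact_mod_cast hm
    have hqm : q ^ m ≤ sweep μ T A (m * r) := claimC m
    have hlog : (m : ℝ) * Real.log q ≤ Real.log (sweep μ T A (m * r)) := by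
      rw [← Real.log_pow]
      exact Real.log_le_log (pow_pos hq0 m) hqm
    have hmr : ((m * r : ℕ) : ℝ) = (m : ℝ) * (r : ℝ) := by push_cast; ring
    rw [hmr]
    rw [div_le_iff₀ (by positivity)]
    have : -(1 / (r : ℝ)) * Real.log q * ((m : ℝ) * (r : ℝ))
        = -((m : ℝ) * Real.log q) := by
      field_simp
    rw [this]
    linarith
end

section
/- In a ψ-mixing system, for ε < 0.1, A ∈ A_ε, and any integer 1 ≤ k < 1/ε, the escape rate satisfies the lower bound ρ_A ≥ -log[1 - k r_A μ(A)(1 - ε - kε(1+ψ_1))(1 - ψ_{ℓ_A})] / ((k+1) r_A). -/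
open MeasureTheory Filter Topology

section Aux

variable {X : Type*} [m0 : MeasurableSpace X]

lemma prob_union_toReal (μ : Measure X) [IsProbabilityMeasure μ] {s t : Set X}
    (ht : MeasurableSet t) :
    (μ (s ∪ t)).toReal = (μ s).toReal + (μ t).toReal - (μ (s ∩ t)).toReal := by
  have h := measure_union_add_inter (μ := μ) s ht
  have h1 : (μ (s ∪ t)).toReal + (μ (s ∩ t)).toReal = (μ s).toReal + (μ t).toReal := by
    rw [← ENNReal.toReal_add (measure_ne_top _ _) (measure_ne_top _ _),
      ← ENNReal.toReal_add (measure_ne_top _ _) (measure_ne_top _ _), h]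
  linarith

lemma bonferroni (μ : Measure X) [IsProbabilityMeasure μ] (C : ℕ → Set X)
    (hC : ∀ i, MeasurableSet (C i)) (N : ℕ) :
    ∑ i ∈ Finset.range N, (μ (C i)).toReal
      - ∑ j ∈ Finset.range N, ∑ i ∈ Finset.range j, (μ (C i ∩ C j)).toReal
      ≤ (μ (⋃ i ∈ Finset.range N, C i)).toReal := by
  induction N with
  | zero => simp
  | succ N ih =>
    have hU : (⋃ i ∈ Finset.range (N + 1), C i)
        = (⋃ i ∈ Finset.range N, C i) ∪ C N := by
      rw [Finset.range_add_one, Finset.set_biUnion_insert, Set.union_comm]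
    have hinter : (μ ((⋃ i ∈ Finset.range N, C i) ∩ C N)).toReal
        ≤ ∑ i ∈ Finset.range N, (μ (C i ∩ C N)).toReal := by
      have h1 : (⋃ i ∈ Finset.range N, C i) ∩ C N
          = ⋃ i ∈ Finset.range N, (C i ∩ C N) := by
        ext x; simp [Set.mem_iUnion]; tauto
      rw [h1, ← ENNReal.toReal_sum (fun a _ => measure_ne_top μ _)]
      refine ENNReal.toReal_mono ?_ (measure_biUnion_finset_le _ _)
      exact (ENNReal.sum_lt_top.mpr (fun a _ => measure_lt_top μ _)).ne
    rw [hU, prob_union_toReal μ (hC N), Finset.sum_range_succ,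
      Finset.sum_range_succ (f := fun j => ∑ i ∈ Finset.range j, (μ (C i ∩ C j)).toReal)]
    linarith

end Aux

set_option maxHeartbeats 1000000 in
theorem escape_rate_lower_bound
    {X : Type*} [m0 : MeasurableSpace X] (μ : Measure X) [IsProbabilityMeasure μ]
    (T : X → X) (hE : Ergodic T μ)
    (𝔅 : ℕ → MeasurableSpace X) (h𝔅le : ∀ n, 𝔅 n ≤ m0) (h𝔅mono : Monotone 𝔅)
    (h𝔅T : ∀ n (S : Set X), MeasurableSet[𝔅 n] S → MeasurableSet[𝔅 (n + 1)] (T ⁻¹' S))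
    (ψ : ℕ → ℝ) (hψnonneg : ∀ n, 0 ≤ ψ n) (hψ0 : Tendsto ψ atTop (nhds 0))
    (hψ1 : ∀ n, ψ n ≤ ψ 1)
    (hmix : ∀ (n m k : ℕ) (S B : Set X), MeasurableSet[𝔅 n] S → MeasurableSet[𝔅 m] B →
      |(μ (S ∩ T^[k + n] ⁻¹' B)).toReal - (μ S).toReal * (μ B).toReal| ≤
        ψ k * (μ S).toReal * (μ B).toReal)
    (A : Set X) (hpos : 0 < μ A) (nA : ℕ) (hnA : MeasurableSet[𝔅 nA] A)
    (hnAmin : ∀ m, MeasurableSet[𝔅 m] A → nA ≤ m)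
    (hs : ∀ k : ℕ, 0 < sweep μ T A k)
    (ε : ℝ) (hε : 0 < ε) (hε1 : ε < 0.1)
    (ℓ : ℕ) (hℓψ : ψ ℓ < ε) (hℓμ : ((nA + ℓ : ℕ) : ℝ) * (μ A).toReal < ε)
    (hcorr : (nA : ℝ) *
        (⨆ i ∈ Finset.Icc 1 nA, (μ (A ∩ T^[i] ⁻¹' A)).toReal / (μ A).toReal) < ε)
    (ρ : ℝ)
    (hρ : Tendsto (fun j : ℕ => -Real.log (sweep μ T A j) / j) atTop (nhds ρ))
    (k : ℕ) (hk1 : 1 ≤ k) (hkε : (k : ℝ) < 1 / ε) :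
    ρ ≥ -Real.log (1 - (k : ℝ) * ((nA + ℓ : ℕ) : ℝ) * (μ A).toReal *
          (1 - ε - (k : ℝ) * ε * (1 + ψ 1)) * (1 - ψ ℓ)) /
        (((k : ℝ) + 1) * ((nA + ℓ : ℕ) : ℝ)) := by
  have hT : Measurable T := hE.toMeasurePreserving.measurable
  have hA : MeasurableSet A := h𝔅le nA A hnA
  set PA := (μ A).toReal with hPAdef
  have hPA : 0 < PA := ENNReal.toReal_pos hpos.ne' (measure_ne_top μ A)
  have hψ1nn : (0:ℝ) ≤ ψ 1 := hψnonneg 1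
  have hψℓ1 : ψ ℓ < 1 := by nlinarith
  have h1ψ : (0:ℝ) < 1 - ψ ℓ := by linarith [hψnonneg ℓ]
  have hsle1 : ∀ n, sweep μ T A n ≤ 1 := by
    intro n
    have h1 : μ (⋂ i ∈ Finset.range n, T^[i] ⁻¹' Aᶜ) ≤ 1 := prob_le_one
    calc sweep μ T A n ≤ (1 : ENNReal).toReal := ENNReal.toReal_mono (by simp) h1
      _ = 1 := by simp
  have hρ0 : 0 ≤ ρ := by
    refine ge_of_tendsto hρ ?_
    filter_upwards [eventually_ge_atTop 1] with j hj
    have h1 : Real.log (sweep μ T A j) ≤ 0 := Real.log_nonpos (hs j).le (hsle1 j)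
    have h2 : (0:ℝ) ≤ (j:ℝ) := Nat.cast_nonneg j
    exact div_nonneg (by linarith) h2
  rcases Nat.eq_zero_or_pos (nA + ℓ) with hr0 | hrpos
  · rw [hr0]
    simpa using hρ0
  set t := 1 - ε - (k:ℝ) * ε * (1 + ψ 1) with htdef
  rcases le_or_gt t 0 with htnp | htpos
  · have hknn : (0:ℝ) ≤ (k:ℝ) * ((nA + ℓ : ℕ):ℝ) * PA := by positivity
    have hcnp : (k:ℝ) * ((nA + ℓ : ℕ):ℝ) * PA * t * (1 - ψ ℓ) ≤ 0 :=
      mul_nonpos_of_nonpos_of_nonneg (mul_nonpos_of_nonneg_of_nonpos hknn htnp) h1ψ.le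
    have hlog : 0 ≤ Real.log (1 - (k:ℝ) * ((nA + ℓ : ℕ):ℝ) * PA * t * (1 - ψ ℓ)) :=
      Real.log_nonneg (by linarith)
    exact le_trans (div_nonpos_of_nonpos_of_nonneg (by linarith) (by positivity)) hρ0
  -- main case
  have hiter : ∀ i, MeasurableSet[𝔅 (nA + i)] (T^[i] ⁻¹' A) := by
    intro i
    induction i with
    | zero => simpa using hnA
    | succ i ih =>
      have h1 : T^[i + 1] ⁻¹' A = T ⁻¹' (T^[i] ⁻¹' A) := by
        rw [Function.iterate_succ, Set.preimage_comp]
      rw [h1]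
      exact h𝔅T (nA + i) _ ih
  have hiterM : ∀ i, MeasurableSet (T^[i] ⁻¹' A) := fun i => h𝔅le _ _ (hiter i)
  have hmp : ∀ i : ℕ, MeasurePreserving T^[i] μ μ := fun i => hE.toMeasurePreserving.iterate i
  have hPApre : ∀ i : ℕ, (μ (T^[i] ⁻¹' A)).toReal = PA := fun i => by
    rw [hPAdef, (hmp i).measure_preimage hA.nullMeasurableSet]
  have hpair : ∀ i j : ℕ, i ≤ j → (μ (T^[i] ⁻¹' A ∩ T^[j] ⁻¹' A)).toReal
      = (μ (A ∩ T^[j - i] ⁻¹' A)).toReal := by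
    intro i j hij
    have h1 : T^[i] ⁻¹' A ∩ T^[j] ⁻¹' A = T^[i] ⁻¹' (A ∩ T^[j - i] ⁻¹' A) := by
      rw [Set.preimage_inter]
      congr 1
      conv_rhs => rw [← Set.preimage_comp, ← Function.iterate_add]
      rw [Nat.sub_add_cancel hij]
    rw [h1, (hmp i).measure_preimage ((hA.inter (hiterM _)).nullMeasurableSet)]
  -- small-lag pair bound
  have hS : ∀ d, 1 ≤ d → d ≤ nA → (nA:ℝ) * (μ (A ∩ T^[d] ⁻¹' A)).toReal < ε * PA := by
    intro d h1d hdnA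
    have hdmem : d ∈ Finset.Icc 1 nA := Finset.mem_Icc.2 ⟨h1d, hdnA⟩
    have hbdd : BddAbove (Set.range fun i : ℕ =>
        ⨆ _ : i ∈ Finset.Icc 1 nA, (μ (A ∩ T^[i] ⁻¹' A)).toReal / PA) := by
      refine ⟨∑ i ∈ Finset.Icc 1 nA, max ((μ (A ∩ T^[i] ⁻¹' A)).toReal / PA) 0, ?_⟩
      rintro x ⟨i, rfl⟩
      by_cases hi : i ∈ Finset.Icc 1 nA
      · have h1 : (⨆ _ : i ∈ Finset.Icc 1 nA, (μ (A ∩ T^[i] ⁻¹' A)).toReal / PA)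
            = (μ (A ∩ T^[i] ⁻¹' A)).toReal / PA := ciSup_pos hi
        have h3 : max ((μ (A ∩ T^[i] ⁻¹' A)).toReal / PA) 0
            ≤ ∑ i ∈ Finset.Icc 1 nA, max ((μ (A ∩ T^[i] ⁻¹' A)).toReal / PA) 0 :=
          Finset.single_le_sum
            (f := fun i => max ((μ (A ∩ T^[i] ⁻¹' A)).toReal / PA) 0)
            (fun j _ => le_max_right _ _) hi
        calc (fun i : ℕ => ⨆ _ : i ∈ Finset.Icc 1 nA,
              (μ (A ∩ T^[i] ⁻¹' A)).toReal / PA) i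
            = (μ (A ∩ T^[i] ⁻¹' A)).toReal / PA := h1
          _ ≤ max ((μ (A ∩ T^[i] ⁻¹' A)).toReal / PA) 0 := le_max_left _ _
          _ ≤ _ := h3
      · haveI hempty : IsEmpty (i ∈ Finset.Icc 1 nA) := ⟨hi⟩
        have h1 : (fun i : ℕ => ⨆ _ : i ∈ Finset.Icc 1 nA,
            (μ (A ∩ T^[i] ⁻¹' A)).toReal / PA) i = 0 := Real.iSup_of_isEmpty _
        rw [h1]
        exact Finset.sum_nonneg fun j _ => le_max_right _ _
    have hle : (μ (A ∩ T^[d] ⁻¹' A)).toReal / PA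
        ≤ ⨆ i ∈ Finset.Icc 1 nA, (μ (A ∩ T^[i] ⁻¹' A)).toReal / PA :=
      by
      have heq : (⨆ _ : d ∈ Finset.Icc 1 nA, (μ (A ∩ T^[d] ⁻¹' A)).toReal / PA)
          = (μ (A ∩ T^[d] ⁻¹' A)).toReal / PA := ciSup_pos hdmem
      exact le_ciSup_of_le hbdd d (le_of_eq heq.symm)
    have h3 : (nA:ℝ) * ((μ (A ∩ T^[d] ⁻¹' A)).toReal / PA) < ε :=
      lt_of_le_of_lt (mul_le_mul_of_nonneg_left hle (Nat.cast_nonneg nA)) hcorr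
    have h5 := mul_lt_mul_of_pos_right h3 hPA
    rwa [mul_assoc, div_mul_cancel₀ _ hPA.ne'] at h5
  -- large-lag pair bound
  have hBig : ∀ d, nA ≤ d → (μ (A ∩ T^[d] ⁻¹' A)).toReal ≤ (1 + ψ 1) * (PA * PA) := by
    intro d hd
    have h0 := hmix nA nA (d - nA) A A hnA hnA
    rw [Nat.sub_add_cancel hd] at h0
    rw [← hPAdef] at h0
    have h1 := (abs_le.mp h0).2
    have h2 : ψ (d - nA) * PA * PA ≤ ψ 1 * (PA * PA) := by
      have := hψ1 (d - nA); nlinarith [hPA.le]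
    nlinarith
  -- the union block
  set kr := k * (nA + ℓ) with hkrdef
  set Bset := ⋃ i ∈ Finset.range kr, T^[i] ⁻¹' A with hBdef
  have hBmeas : MeasurableSet Bset := Finset.measurableSet_biUnion _ (fun i _ => hiterM i)
  set PB := (μ Bset).toReal with hPBdef
  have hsum1 : ∑ i ∈ Finset.range kr, (μ (T^[i] ⁻¹' A)).toReal = (kr:ℝ) * PA := by
    simp [hPApre]
  have hinnerB : ∀ j ∈ Finset.range kr,
      ∑ i ∈ Finset.range j, (μ (T^[i] ⁻¹' A ∩ T^[j] ⁻¹' A)).toReal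
        ≤ ε * PA + (kr:ℝ) * ((1 + ψ 1) * (PA * PA)) := by
    intro j hj
    have hjkr : j ≤ kr := (Finset.mem_range.mp hj).le
    have hterm : ∀ i ∈ Finset.range j,
        (μ (T^[i] ⁻¹' A ∩ T^[j] ⁻¹' A)).toReal
          ≤ (if j - i ≤ nA then ε * PA / nA else 0) + (1 + ψ 1) * (PA * PA) := by
      intro i hi
      have hij : i < j := Finset.mem_range.mp hi
      rw [hpair i j hij.le]
      have hnn : (0:ℝ) ≤ (1 + ψ 1) * (PA * PA) := by positivity
      by_cases hcase : j - i ≤ nA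
      · rw [if_pos hcase]
        have h1d : 1 ≤ j - i := by omega
        have hnApos : 0 < nA := by omega
        have hSd := hS (j - i) h1d hcase
        have h2 : (μ (A ∩ T^[j - i] ⁻¹' A)).toReal ≤ ε * PA / nA := by
          rw [le_div_iff₀ (by exact_mod_cast hnApos : (0:ℝ) < (nA:ℝ))]
          nlinarith
        linarith
      · rw [if_neg hcase]
        have := hBig (j - i) (by omega)
        linarith
    have hsum2 : ∑ i ∈ Finset.range j, (if j - i ≤ nA then ε * PA / nA else 0)
        ≤ ε * PA := by
      rw [← Finset.sum_filter, Finset.sum_const, nsmul_eq_mul]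
      have hcard : ((Finset.range j).filter (fun i => j - i ≤ nA)).card ≤ nA := by
        have hsub : (Finset.range j).filter (fun i => j - i ≤ nA)
            ⊆ Finset.Ico (j - nA) j := by
          intro i hi
          simp only [Finset.mem_filter, Finset.mem_range, Finset.mem_Ico] at *
          omega
        calc ((Finset.range j).filter (fun i => j - i ≤ nA)).card
            ≤ (Finset.Ico (j - nA) j).card := Finset.card_le_card hsub
          _ = j - (j - nA) := Nat.card_Ico _ _
          _ ≤ nA := by omega
      have hc : (0:ℝ) ≤ ε * PA / nA := by positivity
      have h7 : ((((Finset.range j).filter (fun i => j - i ≤ nA)).card : ℕ) : ℝ)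
            * (ε * PA / nA) ≤ (nA:ℝ) * (ε * PA / nA) :=
        mul_le_mul_of_nonneg_right (Nat.cast_le.2 hcard) hc
      have h8 : (nA:ℝ) * (ε * PA / nA) ≤ ε * PA := by
        rcases Nat.eq_zero_or_pos nA with h | h
        · simp [h]
          positivity
        · have hne : (nA:ℝ) ≠ 0 := Nat.cast_ne_zero.2 h.ne'
          rw [mul_comm, div_mul_cancel₀ _ hne]
      linarith
    calc ∑ i ∈ Finset.range j, (μ (T^[i] ⁻¹' A ∩ T^[j] ⁻¹' A)).toReal
        ≤ ∑ i ∈ Finset.range j,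
            ((if j - i ≤ nA then ε * PA / nA else 0) + (1 + ψ 1) * (PA * PA)) :=
          Finset.sum_le_sum hterm
      _ = (∑ i ∈ Finset.range j, (if j - i ≤ nA then ε * PA / nA else 0))
            + (j:ℝ) * ((1 + ψ 1) * (PA * PA)) := by
          rw [Finset.sum_add_distrib, Finset.sum_const, Finset.card_range, nsmul_eq_mul]
      _ ≤ ε * PA + (kr:ℝ) * ((1 + ψ 1) * (PA * PA)) := by
          have hj' : (j:ℝ) ≤ (kr:ℝ) := Nat.cast_le.2 hjkr
          have hnn : (0:ℝ) ≤ (1 + ψ 1) * (PA * PA) := by positivity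
          have hjm := mul_le_mul_of_nonneg_right hj' hnn
          linarith
    -- lower bound on PB
  have hkrcast : (kr:ℝ) = (k:ℝ) * ((nA + ℓ : ℕ):ℝ) := by
    rw [hkrdef]; push_cast; ring
  have hPBlow : (kr:ℝ) * PA * t ≤ PB := by
    have hb := bonferroni μ (fun i => T^[i] ⁻¹' A) hiterM kr
    rw [hsum1, ← hBdef, ← hPBdef] at hb
    have houter : ∑ j ∈ Finset.range kr, ∑ i ∈ Finset.range j,
        (μ (T^[i] ⁻¹' A ∩ T^[j] ⁻¹' A)).toReal
        ≤ (kr:ℝ) * (ε * PA + (kr:ℝ) * ((1 + ψ 1) * (PA * PA))) := by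
      calc ∑ j ∈ Finset.range kr, ∑ i ∈ Finset.range j,
          (μ (T^[i] ⁻¹' A ∩ T^[j] ⁻¹' A)).toReal
          ≤ ∑ _j ∈ Finset.range kr,
              (ε * PA + (kr:ℝ) * ((1 + ψ 1) * (PA * PA))) := Finset.sum_le_sum hinnerB
        _ = (kr:ℝ) * (ε * PA + (kr:ℝ) * ((1 + ψ 1) * (PA * PA))) := by
            rw [Finset.sum_const, Finset.card_range, nsmul_eq_mul]
    have hkrPA : (kr:ℝ) * PA ≤ (k:ℝ) * ε := by
      rw [hkrcast, mul_assoc]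
      exact mul_le_mul_of_nonneg_left hℓμ.le (Nat.cast_nonneg k)
    have hkrPAnn : (0:ℝ) ≤ (kr:ℝ) * PA := by positivity
    have h6 : ((kr:ℝ) * PA) * ((kr:ℝ) * PA) * (1 + ψ 1)
        ≤ ((kr:ℝ) * PA) * ((k:ℝ) * ε) * (1 + ψ 1) := by
      have h1ψ1 : (0:ℝ) ≤ 1 + ψ 1 := by linarith
      exact mul_le_mul_of_nonneg_right
        (mul_le_mul_of_nonneg_left hkrPA hkrPAnn) h1ψ1
    rw [htdef]
    nlinarith [hb, houter]
  -- the one-block step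
  set K := (k + 1) * (nA + ℓ) with hKdef
  have hKeq : K = kr + (nA + ℓ) := by rw [hKdef, hkrdef]; ring
  have hBsetF : MeasurableSet[𝔅 (nA + kr)] Bset := by
    refine Finset.measurableSet_biUnion _ ?_
    intro i hi
    have hi' : i < kr := Finset.mem_range.mp hi
    exact h𝔅mono (by omega : nA + i ≤ nA + kr) _ (hiter i)
  have hstep : ∀ n, sweep μ T A (n + K)
      ≤ sweep μ T A n * (1 - PB * (1 - ψ ℓ)) := by
    intro n
    set En := ⋂ i ∈ Finset.range n, T^[i] ⁻¹' Aᶜ with hEndef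
    have hEnMeas : MeasurableSet En :=
      Finset.measurableSet_biInter _ fun i _ => (hiterM i).compl
    have hEnMeasF : MeasurableSet[𝔅 (n + nA)] En := by
      refine Finset.measurableSet_biInter _ ?_
      intro i hi
      have hi' : i < n := Finset.mem_range.mp hi
      have h1 : MeasurableSet[𝔅 (nA + i)] (T^[i] ⁻¹' Aᶜ) := by
        rw [Set.preimage_compl]
        exact (hiter i).compl
      exact h𝔅mono (by omega : nA + i ≤ n + nA) _ h1
    have hmix1 := hmix (n + nA) (nA + kr) ℓ En Bset hEnMeasF hBsetF
    have hexp : ℓ + (n + nA) = n + (nA + ℓ) := by omega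
    rw [hexp, ← hPBdef] at hmix1
    have hlow : (μ En).toReal * PB * (1 - ψ ℓ)
        ≤ (μ (En ∩ T^[n + (nA + ℓ)] ⁻¹' Bset)).toReal := by
      have h1 := (abs_le.mp hmix1).1
      nlinarith [ENNReal.toReal_nonneg (a := μ En), ENNReal.toReal_nonneg (a := μ Bset)]
    have hsub : (⋂ i ∈ Finset.range (n + K), T^[i] ⁻¹' Aᶜ)
        ⊆ En \ (T^[n + (nA + ℓ)] ⁻¹' Bset) := by
      intro x hx
      simp only [Set.mem_iInter, Finset.mem_range, Set.mem_preimage,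
        Set.mem_compl_iff] at hx
      constructor
      · simp only [hEndef, Set.mem_iInter, Finset.mem_range, Set.mem_preimage,
          Set.mem_compl_iff]
        intro i hi
        exact hx i (by omega)
      · intro hmem
        simp only [Set.mem_preimage, hBdef, Set.mem_iUnion, Finset.mem_range] at hmem
        obtain ⟨i, hikr, hiA⟩ := hmem
        rw [← Function.iterate_add_apply] at hiA
        exact hx (i + (n + (nA + ℓ))) (by omega) hiA
    have hpre : MeasurableSet (T^[n + (nA + ℓ)] ⁻¹' Bset) := (hmp (n + (nA + ℓ))).measurable hBmeas
    have h2 := measure_inter_add_diff (μ := μ) En hpre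
    have h3 : (μ (En ∩ T^[n + (nA + ℓ)] ⁻¹' Bset)).toReal
        + (μ (En \ T^[n + (nA + ℓ)] ⁻¹' Bset)).toReal = (μ En).toReal := by
      rw [← ENNReal.toReal_add (measure_ne_top _ _) (measure_ne_top _ _), h2]
    have h4 : sweep μ T A (n + K) ≤ (μ (En \ T^[n + (nA + ℓ)] ⁻¹' Bset)).toReal :=
      ENNReal.toReal_mono (measure_ne_top _ _) (measure_mono hsub)
    have h5 : sweep μ T A n = (μ En).toReal := rfl
    rw [h5]
    nlinarith [hlow, h3, h4]
  have hq0 : (0:ℝ) < 1 - PB * (1 - ψ ℓ) := by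
    have h0 := hstep 0
    have hs0 : sweep μ T A 0 = 1 := by simp [sweep]
    rw [hs0, one_mul] at h0
    exact lt_of_lt_of_le (hs (0 + K)) h0
  have hpow : ∀ j : ℕ, sweep μ T A (j * K) ≤ (1 - PB * (1 - ψ ℓ)) ^ j := by
    intro j
    induction j with
    | zero =>
      rw [Nat.zero_mul, pow_zero]
      exact hsle1 0
    | succ j ih =>
      have h1 : (j + 1) * K = j * K + K := by ring
      rw [h1, pow_succ]
      calc sweep μ T A (j * K + K)
          ≤ sweep μ T A (j * K) * (1 - PB * (1 - ψ ℓ)) := hstep (j * K)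
        _ ≤ (1 - PB * (1 - ψ ℓ)) ^ j * (1 - PB * (1 - ψ ℓ)) :=
            mul_le_mul_of_nonneg_right ih hq0.le
  set c := (k:ℝ) * ((nA + ℓ : ℕ):ℝ) * PA * t * (1 - ψ ℓ) with hcdef
  have hcle : c ≤ PB * (1 - ψ ℓ) := by
    rw [hcdef, show (k:ℝ) * ((nA + ℓ : ℕ):ℝ) * PA * t = (kr:ℝ) * PA * t by
      rw [hkrcast]]
    exact mul_le_mul_of_nonneg_right hPBlow h1ψ.le
  have h1c : (0:ℝ) < 1 - c := by linarith
  have hK1 : 1 ≤ K := by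
    rw [hKeq]; omega
  have hKpos : (0:ℝ) < (K:ℝ) := by exact_mod_cast hK1
  have hlogj : ∀ j : ℕ, 1 ≤ j →
      -Real.log (1 - c) / (K:ℝ)
        ≤ -Real.log (sweep μ T A (j * K)) / ((j * K : ℕ):ℝ) := by
    intro j hj
    have hjpos : (0:ℝ) < (j:ℝ) := by exact_mod_cast hj
    have hsw : sweep μ T A (j * K) ≤ (1 - c) ^ j :=
      le_trans (hpow j) (pow_le_pow_left₀ hq0.le (by linarith) j)
    have hlog : Real.log (sweep μ T A (j * K)) ≤ (j:ℝ) * Real.log (1 - c) := by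
      rw [← Real.log_pow]
      exact Real.log_le_log (hs _) hsw
    have hcast : ((j * K : ℕ):ℝ) = (j:ℝ) * (K:ℝ) := Nat.cast_mul j K
    rw [hcast, div_le_div_iff₀ hKpos (mul_pos hjpos hKpos)]
    nlinarith [mul_le_mul_of_nonneg_right hlog hKpos.le]
  have hcomp : Tendsto (fun j : ℕ =>
      -Real.log (sweep μ T A (j * K)) / ((j * K : ℕ):ℝ)) atTop (nhds ρ) := by
    refine hρ.comp ?_
    refine tendsto_atTop_mono (fun j => ?_) tendsto_id
    calc j = j * 1 := (Nat.mul_one j).symm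
      _ ≤ j * K := Nat.mul_le_mul_left j hK1
  refine ge_of_tendsto hcomp ?_
  filter_upwards [eventually_ge_atTop 1] with j hj
  have hden : (((k:ℝ) + 1) * ((nA + ℓ : ℕ):ℝ)) = (K:ℝ) := by
    rw [hKdef]; push_cast; ring
  rw [hden]
  exact hlogj j hj
end

section
/- Let f ∈ L^1(X, μ) with 0 ≤ f ≤ 1 and ‖f‖_1 > 0, and define τ_f(x) = inf{k ≥ 1 : f(Tx) + ... + f(T^k x) ≥ 1}, A_f = supp f, and s_f(k) = μ(τ_f > k). Then for every k ≥ 0, μ_{A_f}(τ_f > k) = (1/μ(A_f))·(s_f(k) - s_f(k+1)) + μ_{T^{-1}A_f}(τ_f > k+1). -/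
open MeasureTheory Filter Topology

/-- Generalized hitting time `τ_f(x) = inf {k ≥ 1 : f(Tx) + ⋯ + f(T^k x) ≥ 1}`. -/
noncomputable def hitTimeF {X : Type*} (T : X → X) (f : X → ℝ) (x : X) : ℕ∞ :=
  sInf ((↑) '' {k : ℕ | 1 ≤ k ∧ 1 ≤ ∑ j ∈ Finset.Icc 1 k, f (T^[j] x)})

/-- `s_f(k) = μ(τ_f > k)`. -/
noncomputable def sweepF {X : Type*} [MeasurableSpace X] (μ : Measure X) (T : X → X)
    (f : X → ℝ) (k : ℕ) : ℝ :=
  (μ {x | (k : ℕ∞) < hitTimeF T f x}).toReal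

private lemma lt_hitTimeF_iff {X : Type*} (T : X → X) (f : X → ℝ)
    (hf0 : ∀ x, 0 ≤ f x) (k : ℕ) (x : X) :
    (k : ℕ∞) < hitTimeF T f x ↔ ∑ j ∈ Finset.Icc 1 k, f (T^[j] x) < 1 := by
  constructor
  · intro h
    by_contra hle
    push_neg at hle
    have hk1 : 1 ≤ k := by
      rcases Nat.eq_zero_or_pos k with h0 | h1
      · subst h0; simp at hle; linarith
      · exact h1
    rw [hitTimeF] at h
    have hmem : (k : ℕ∞) ∈
        (↑) '' {k : ℕ | 1 ≤ k ∧ 1 ≤ ∑ j ∈ Finset.Icc 1 k, f (T^[j] x)} :=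
      Set.mem_image_of_mem _ (Set.mem_setOf.mpr ⟨hk1, hle⟩)
    exact absurd (sInf_le hmem) (not_le.mpr h)
  · intro h
    have hle : ((k + 1 : ℕ) : ℕ∞) ≤ hitTimeF T f x := by
      apply le_sInf
      rintro _ ⟨m, ⟨hm1, hm⟩, rfl⟩
      have hkm : k < m := by
        by_contra hmk
        push_neg at hmk
        have : ∑ j ∈ Finset.Icc 1 m, f (T^[j] x) ≤ ∑ j ∈ Finset.Icc 1 k, f (T^[j] x) :=
          Finset.sum_le_sum_of_subset_of_nonneg
            (Finset.Icc_subset_Icc_right hmk) (fun i _ _ => hf0 _)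
        linarith
      exact_mod_cast hkm
    exact lt_of_lt_of_le (by exact_mod_cast Nat.lt_succ_self k) hle

private lemma sum_Icc_succ_eq {X : Type*} (T : X → X) (f : X → ℝ) (k : ℕ) (x : X) :
    ∑ j ∈ Finset.Icc 1 (k + 1), f (T^[j] x) =
      (∑ j ∈ Finset.Icc 1 k, f (T^[j] (T x))) + f (T x) := by
  rw [← Finset.Ico_add_one_right_eq_Icc, ← Finset.Ico_add_one_right_eq_Icc, Finset.sum_Ico_eq_sum_range,
    Finset.sum_Ico_eq_sum_range]
  simp only [Nat.add_sub_cancel, Nat.succ_sub_one]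
  rw [Finset.sum_range_succ']
  simp only [Nat.add_zero, Function.iterate_one]
  congr 1

theorem generalized_return_identity {X : Type*} [MeasurableSpace X] (μ : Measure X)
    [IsProbabilityMeasure μ] (T : X → X) (hE : Ergodic T μ)
    (f : X → ℝ) (hfm : Measurable f) (hfi : Integrable f μ)
    (hf0 : ∀ x, 0 ≤ f x) (hf1 : ∀ x, f x ≤ 1) (hfpos : 0 < ∫ x, f x ∂μ) (k : ℕ) :
    ((ProbabilityTheory.cond μ (Function.support f))
        {x | (k : ℕ∞) < hitTimeF T f x}).toReal =
      (1 / (μ (Function.support f)).toReal) * (sweepF μ T f k - sweepF μ T f (k + 1)) +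
        ((ProbabilityTheory.cond μ (T ⁻¹' Function.support f))
          {x | ((k + 1 : ℕ) : ℕ∞) < hitTimeF T f x}).toReal := by
  have hT : MeasurePreserving T μ μ := hE.toMeasurePreserving
  have hTm : Measurable T := hT.measurable
  set A := Function.support f with hA
  have hAm : MeasurableSet A := measurableSet_support hfm
  -- sets
  have hSeq : ∀ m : ℕ, {x | (m : ℕ∞) < hitTimeF T f x}
      = {x | ∑ j ∈ Finset.Icc 1 m, f (T^[j] x) < 1} :=
    fun m => Set.ext fun x => lt_hitTimeF_iff T f hf0 m x
  have hg : ∀ m : ℕ, Measurable fun x => ∑ j ∈ Finset.Icc 1 m, f (T^[j] x) :=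
    fun m => Finset.measurable_sum _ (fun j _ => hfm.comp (hTm.iterate j))
  have hSm : ∀ m : ℕ, MeasurableSet {x | (m : ℕ∞) < hitTimeF T f x} := by
    intro m
    rw [hSeq m]
    exact measurableSet_lt (hg m) measurable_const
  set Sk := {x | (k : ℕ∞) < hitTimeF T f x} with hSk
  set Sk1 := {x | ((k + 1 : ℕ) : ℕ∞) < hitTimeF T f x} with hSk1
  -- positivity of μ A
  have hA0 : μ A ≠ 0 := by
    intro h0
    have hz : f =ᵐ[μ] 0 := by
      rw [Filter.EventuallyEq, ae_iff]
      simpa [hA, Function.support] using h0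
    rw [integral_congr_ae hz] at hfpos
    simp at hfpos
  have ha : 0 < (μ A).toReal := ENNReal.toReal_pos hA0 (measure_ne_top μ A)
  -- key set identity
  have hkey : Sk1 \ (T ⁻¹' A) = T ⁻¹' (Sk \ A) := by
    rw [hSk, hSk1, hSeq, hSeq]
    ext x
    simp only [Set.mem_diff, Set.mem_preimage, Set.mem_setOf_eq, Function.mem_support,
      not_not, hA]
    rw [sum_Icc_succ_eq]
    constructor
    · rintro ⟨h1, h2⟩
      exact ⟨by linarith, h2⟩
    · rintro ⟨h1, h2⟩
      exact ⟨by linarith, h2⟩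
  have hpreA : μ (T ⁻¹' A) = μ A := hT.measure_preimage hAm.nullMeasurableSet
  -- measure identities
  have e1 : μ (A ∩ Sk) + μ (Sk \ A) = μ Sk := by
    rw [Set.inter_comm]; exact measure_inter_add_diff Sk hAm
  have e2 : μ ((T ⁻¹' A) ∩ Sk1) + μ (Sk1 \ T ⁻¹' A) = μ Sk1 := by
    rw [Set.inter_comm]; exact measure_inter_add_diff Sk1 (hTm hAm)
  have e3 : μ (Sk1 \ T ⁻¹' A) = μ (Sk \ A) := by
    rw [hkey]
    exact hT.measure_preimage ((hSm k).diff hAm).nullMeasurableSet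
  -- pass to reals
  have r1 : (μ (A ∩ Sk)).toReal + (μ (Sk \ A)).toReal = (μ Sk).toReal := by
    rw [← ENNReal.toReal_add (measure_ne_top _ _) (measure_ne_top _ _), e1]
  have r2 : (μ ((T ⁻¹' A) ∩ Sk1)).toReal + (μ (Sk1 \ T ⁻¹' A)).toReal = (μ Sk1).toReal := by
    rw [← ENNReal.toReal_add (measure_ne_top _ _) (measure_ne_top _ _), e2]
  have r3 : (μ (Sk1 \ T ⁻¹' A)).toReal = (μ (Sk \ A)).toReal := by rw [e3]
  -- unfold the conditional measures
  rw [ProbabilityTheory.cond_apply hAm, ProbabilityTheory.cond_apply (hTm hAm)]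
  rw [ENNReal.toReal_mul, ENNReal.toReal_mul, ENNReal.toReal_inv, ENNReal.toReal_inv, hpreA]
  show (μ A).toReal⁻¹ * (μ (A ∩ Sk)).toReal
      = 1 / (μ A).toReal * (sweepF μ T f k - sweepF μ T f (k + 1))
        + (μ A).toReal⁻¹ * (μ ((T ⁻¹' A) ∩ Sk1)).toReal
  have hsw : sweepF μ T f k = (μ Sk).toReal := rfl
  have hsw1 : sweepF μ T f (k + 1) = (μ Sk1).toReal := rfl
  rw [hsw, hsw1, inv_eq_one_div]
  have hb : (μ (A ∩ Sk)).toReal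
      = ((μ Sk).toReal - (μ Sk1).toReal) + (μ ((T ⁻¹' A) ∩ Sk1)).toReal := by linarith
  rw [hb]; ring
end
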